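/- arXiv:1702.03836 — 3 statements merged into one kernel-verified Lean document; each statement's English description precedes it below -/
import Mathlib

section
/- For every m ≥ 1 and every unit v of ℤ̂, the element Φ_m(t^v) lies in the principal ideal generated by Φ_m(t) in ℤ̂[[t^ℤ̂]], and the unique element u ∈ ℤ̂[[t^ℤ̂]] with Φ_m(t^v) = Φ_m(t)·u is a unit of ℤ̂[[t^ℤ̂]]; in other words, the fraction Φ_m(t^v)/Φ_m(t) is defined and is a unit of ℤ̂[[t^ℤ̂]]. -/
open Polynomial

set_option synthInstance.maxHeartbeats 1000000
set_option maxHeartbeats 1000000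

noncomputable section
noncomputable section

/-- The ring of profinite integers `ẐZ = lim_n ℤ/nℤ`, realized as the subring of
`∏ n : ℕ+, ZMod n` consisting of families compatible under the natural projections. -/
def ZHatSubring : Subring (∀ n : ℕ+, ZMod n) where
  carrier := {f | ∀ (m n : ℕ+) (h : (m : ℕ) ∣ (n : ℕ)), ZMod.castHom h (ZMod m) (f n) = f m}
  mul_mem' := fun {a b} ha hb m n h => by
    simp only [Pi.mul_apply, map_mul, ha m n h, hb m n h]
  one_mem' := fun m n h => map_one _
  add_mem' := fun {a b} ha hb m n h => by
    simp only [Pi.add_apply, map_add, ha m n h, hb m n h]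
  zero_mem' := fun m n h => map_zero _
  neg_mem' := fun {a} ha m n h => by
    simp only [Pi.neg_apply, map_neg, ha m n h]

/-- The profinite integers as a type. -/
abbrev ZHat : Type := ZHatSubring

instance : CommRing ZHat := inferInstance

/-- The quotient ring `R[t]/(tⁿ - 1)`. -/
abbrev CycModN (R : Type) [CommRing R] (n : ℕ+) : Type :=
  Polynomial R ⧸ Ideal.span {(X : Polynomial R) ^ (n : ℕ) - 1}

lemma X_pow_sub_one_dvd {R : Type} [CommRing R] {m n : ℕ} (h : m ∣ n) :
    (X : Polynomial R) ^ m - 1 ∣ (X : Polynomial R) ^ n - 1 := by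
  obtain ⟨k, rfl⟩ := h
  simpa [pow_mul] using sub_dvd_pow_sub_pow ((X : Polynomial R) ^ m) 1 k

/-- The natural transition map `R[t]/(tⁿ-1) → R[t]/(tᵐ-1)` for `m ∣ n`. -/
def cycTransition (R : Type) [CommRing R] {m n : ℕ+} (h : (m : ℕ) ∣ (n : ℕ)) :
    CycModN R n →+* CycModN R m :=
  Ideal.Quotient.factor
    (Ideal.span_singleton_le_span_singleton.mpr (X_pow_sub_one_dvd h))

/-- The completed group ring `R[[t^Ẑ]] = lim_n R[t]/(tⁿ-1)`, realized as the subring of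
`∏ n : ℕ+, R[t]/(tⁿ-1)` of families compatible under the transition maps. -/
def CompletedCycRing (R : Type) [CommRing R] : Subring (∀ n : ℕ+, CycModN R n) where
  carrier := {f | ∀ (m n : ℕ+) (h : (m : ℕ) ∣ (n : ℕ)), cycTransition R h (f n) = f m}
  mul_mem' := fun {a b} ha hb m n h => by
    simp only [Pi.mul_apply, map_mul, ha m n h, hb m n h]
  one_mem' := fun m n h => map_one _
  add_mem' := fun {a b} ha hb m n h => by
    simp only [Pi.add_apply, map_add, ha m n h, hb m n h]
  zero_mem' := fun m n h => map_zero _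
  neg_mem' := fun {a} ha m n h => by
    simp only [Pi.neg_apply, map_neg, ha m n h]

instance completedCycRingCommRing (R : Type) [CommRing R] :
    CommRing (CompletedCycRing R) := inferInstance

/-- The natural ring homomorphism `R[t] → R[[t^Ẑ]]`, `f ↦ (f mod (tⁿ-1))ₙ`. -/
def polyToCompleted (R : Type) [CommRing R] : Polynomial R →+* CompletedCycRing R :=
  RingHom.codRestrict (Pi.ringHom fun n => Ideal.Quotient.mk _) _
    (fun f m n h => by
      exact Ideal.Quotient.factor_mk _ f)

/-- The natural ring homomorphism `ℤ[t] → R[[t^Ẑ]]`. -/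
def intPolyEmb (R : Type) [CommRing R] : Polynomial ℤ →+* CompletedCycRing R :=
  (polyToCompleted R).comp (Polynomial.mapRingHom (Int.castRingHom R))


/-- The image of `t` in `R[t]/(tⁿ-1)`. -/
def tGen (R : Type) [CommRing R] (n : ℕ+) : CycModN R n :=
  Ideal.Quotient.mk _ X

lemma tGen_pow_eq_one (R : Type) [CommRing R] (n : ℕ+) : (tGen R n) ^ (n : ℕ) = 1 := by
  have h : (Ideal.Quotient.mk (Ideal.span {(X : Polynomial R) ^ (n : ℕ) - 1}))
      ((X : Polynomial R) ^ (n : ℕ) - 1) = 0 :=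
    Ideal.Quotient.eq_zero_iff_mem.mpr (Ideal.subset_span rfl)
  simpa [tGen, map_sub, map_pow, sub_eq_zero] using h

lemma cycTransition_tGen (R : Type) [CommRing R] {m n : ℕ+} (h : (m : ℕ) ∣ (n : ℕ)) :
    cycTransition R h (tGen R n) = tGen R m :=
  Ideal.Quotient.factor_mk _ _

/-- For `v ∈ Ẑ` and `g ∈ ℤ[t]`, the element `g(t^v)` of `R[[t^Ẑ]]`, whose `n`-th component is
`g(t^{v_n}) mod (tⁿ-1)`, where `v ≡ v_n (mod n)`. -/
def substPow (R : Type) [CommRing R] (v : ZHat) (g : Polynomial ℤ) : CompletedCycRing R :=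
  ⟨fun n => Polynomial.aeval ((tGen R n) ^ ((v.1 n).val)) g, by
    intro m n h
    haveI : NeZero (m : ℕ) := ⟨m.ne_zero⟩
    haveI : NeZero (n : ℕ) := ⟨n.ne_zero⟩
    have hcomm : cycTransition R h (Polynomial.aeval ((tGen R n) ^ ((v.1 n).val)) g)
        = Polynomial.aeval (cycTransition R h ((tGen R n) ^ ((v.1 n).val))) g :=
      (Polynomial.aeval_algHom_apply ((cycTransition R h).toIntAlgHom) _ g).symm
    have hval : ((v.1 n).val) % (m : ℕ) = ((v.1 m).val) % (m : ℕ) := by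
      have hv := v.2 m n h
      have h2 : (v.1 m) = (((v.1 n).val : ℕ) : ZMod (m : ℕ)) := by
        rw [← hv, ZMod.castHom_apply, ← ZMod.natCast_val]
      rw [h2, ZMod.val_natCast]
      exact (Nat.mod_mod_of_dvd _ dvd_rfl).symm
    have hpow : (tGen R m) ^ ((v.1 n).val) = (tGen R m) ^ ((v.1 m).val) := by
      rw [pow_eq_pow_mod _ (tGen_pow_eq_one R m), hval,
        ← pow_eq_pow_mod _ (tGen_pow_eq_one R m)]
    rw [hcomm, map_pow, cycTransition_tGen, hpow]⟩

-- ===== Auxiliary development =====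

instance pnatNeZero (k : ℕ+) : NeZero (k : ℕ) := ⟨k.ne_zero⟩

lemma ZHat.ext' {a b : ZHat} (h : ∀ k : ℕ+, a.1 k = b.1 k) : a = b :=
  Subtype.ext (funext h)

lemma ZHat.mul_apply (a b : ZHat) (k : ℕ+) : (a * b).1 k = a.1 k * b.1 k := rfl
lemma ZHat.add_apply (a b : ZHat) (k : ℕ+) : (a + b).1 k = a.1 k + b.1 k := rfl
lemma ZHat.sub_apply (a b : ZHat) (k : ℕ+) : (a - b).1 k = a.1 k - b.1 k := rfl
lemma ZHat.zero_apply (k : ℕ+) : (0 : ZHat).1 k = 0 := rfl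
lemma ZHat.one_apply (k : ℕ+) : (1 : ZHat).1 k = 1 := rfl
lemma ZHat.natCast_apply (j : ℕ) (k : ℕ+) : ((j : ZHat)).1 k = (j : ZMod k) := by
  induction j with
  | zero => rfl
  | succ n ih => push_cast; rw [← ih]; rfl

instance : Nontrivial ZHat := by
  refine ⟨0, 1, fun h => ?_⟩
  have := congrArg (fun a : ZHat => a.1 2) h
  simp only [ZHat.zero_apply, ZHat.one_apply] at this
  exact absurd this (by decide)

lemma ZHat.apply_of_dvd (a : ZHat) {k n : ℕ+} (h : (k : ℕ) ∣ (n : ℕ)) :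
    a.1 k = ((a.1 n).val : ZMod k) := by
  rw [← a.2 k n h, ZMod.castHom_apply, ZMod.natCast_val]

/-- `k` is a regular element of `ZHat`. -/
lemma ZHat.natCast_mul_cancel {j : ℕ+} {a b : ZHat} (h : (j : ZHat) * a = (j : ZHat) * b) :
    a = b := by
  apply ZHat.ext'
  intro k
  have h2 := congrArg (fun x : ZHat => x.1 (j * k)) h
  simp only [ZHat.mul_apply, ZHat.natCast_apply] at h2
  set α := a.1 (j * k) with hα
  set β := b.1 (j * k) with hβ
  have hval : ((j : ℕ) * α.val : ℕ) ≡ ((j : ℕ) * β.val : ℕ) [MOD ((j * k : ℕ+) : ℕ)] := by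
    have : (((j : ℕ) * α.val : ℕ) : ZMod (j * k)) = (((j : ℕ) * β.val : ℕ) : ZMod (j * k)) := by
      show (((j : ℕ) * α.val : ℕ) : ZMod ((j * k : ℕ+) : ℕ)) = (((j : ℕ) * β.val : ℕ) : ZMod ((j * k : ℕ+) : ℕ))
      rw [Nat.cast_mul, Nat.cast_mul, ZMod.natCast_zmod_val, ZMod.natCast_zmod_val]
      exact h2
    exact (ZMod.natCast_eq_natCast_iff _ _ _).1 this
  have hval' : (j : ℕ) * α.val ≡ (j : ℕ) * β.val [MOD (j : ℕ) * (k : ℕ)] := hval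
  have hk : α.val ≡ β.val [MOD (k : ℕ)] :=
    Nat.ModEq.mul_left_cancel' j.ne_zero hval'
  have hd : (k : ℕ) ∣ ((j * k : ℕ+) : ℕ) := ⟨j, by rw [PNat.mul_coe, mul_comm]⟩
  rw [ZHat.apply_of_dvd a hd, ZHat.apply_of_dvd b hd, ← hα, ← hβ]
  exact (ZMod.natCast_eq_natCast_iff _ _ _).2 hk

/-- Division by `n` in `ZHat` of elements whose level-`n` component vanishes. -/
lemma ZHat.exists_div (n : ℕ+) (a : ZHat) (h : a.1 n = 0) :
    ∃ b : ZHat, (n : ZHat) * b = a := by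
  have hdvd : ∀ k : ℕ+, (n : ℕ) ∣ (a.1 (n * k)).val := by
    intro k
    have := ZHat.apply_of_dvd a (k := n) (n := n * k) ⟨k, rfl⟩
    rw [h] at this
    exact (ZMod.natCast_eq_zero_iff _ _).1 this.symm
  refine ⟨⟨fun k => (((a.1 (n * k)).val / (n : ℕ) : ℕ) : ZMod k), ?_⟩, ?_⟩
  · intro j k hjk
    have hd2 : ((n * j : ℕ+) : ℕ) ∣ ((n * k : ℕ+) : ℕ) := mul_dvd_mul_left (n : ℕ) hjk
    obtain ⟨W, hW⟩ := hdvd k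
    have hj : (a.1 (n * j)).val = (n : ℕ) * (W % (j : ℕ)) := by
      rw [ZHat.apply_of_dvd a hd2, ZMod.val_natCast, hW]
      show (n : ℕ) * W % ((n : ℕ) * (j : ℕ)) = _
      rw [Nat.mul_mod_mul_left]
    show ZMod.castHom hjk (ZMod j) (((a.1 (n * k)).val / (n : ℕ) : ℕ) : ZMod k)
        = (((a.1 (n * j)).val / (n : ℕ) : ℕ) : ZMod j)
    rw [map_natCast, hj, hW, Nat.mul_div_cancel_left _ n.pos,
      Nat.mul_div_cancel_left _ n.pos]
    exact (ZMod.natCast_eq_natCast_iff _ _ _).2 (Nat.mod_modEq W (j : ℕ)).symm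
  · apply ZHat.ext'
    intro k
    rw [ZHat.mul_apply, ZHat.natCast_apply]
    show (n : ZMod k) * (((a.1 (n * k)).val / (n : ℕ) : ℕ) : ZMod k) = a.1 k
    rw [← Nat.cast_mul, Nat.mul_div_cancel' (hdvd k),
      ZHat.apply_of_dvd a (k := k) (n := n * k) ⟨n, mul_comm (n:ℕ) (k:ℕ)⟩]

-- ===== geometric sums =====

lemma mul_geom_sum_of_pow_eq_one {S : Type} [CommRing S] {s : S} {N : ℕ} (hs : s ^ N = 1) :
    s * ∑ i ∈ Finset.range N, s ^ i = ∑ i ∈ Finset.range N, s ^ i := by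
  have h := mul_geom_sum s N
  rw [hs, sub_self, sub_one_mul, sub_eq_zero] at h
  exact h

lemma pow_mul_geom_sum_of_pow_eq_one {S : Type} [CommRing S] {s : S} {N : ℕ} (hs : s ^ N = 1)
    (b : ℕ) : s ^ b * ∑ i ∈ Finset.range N, s ^ i = ∑ i ∈ Finset.range N, s ^ i := by
  induction b with
  | zero => simp
  | succ t ih => rw [pow_succ, mul_assoc, mul_geom_sum_of_pow_eq_one hs, ih]

lemma geom_sum_shift {S : Type} [CommRing S] {s : S} {N : ℕ} (hs : s ^ N = 1) (a q : ℕ) :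
    ∑ i ∈ Finset.range (a + q * N), s ^ i
      = (∑ i ∈ Finset.range a, s ^ i) + (q : S) * ∑ i ∈ Finset.range N, s ^ i := by
  induction q with
  | zero => simp
  | succ t ih =>
      have hidx : a + (t + 1) * N = (a + t * N) + N := by ring
      rw [hidx, Finset.sum_range_add, ih]
      have : ∀ i, s ^ (a + t * N + i) = s ^ (a + t * N) * s ^ i := fun i => pow_add s _ i
      rw [Finset.sum_congr rfl (fun i _ => this i), ← Finset.mul_sum,
        pow_mul_geom_sum_of_pow_eq_one hs]
      push_cast
      ring

-- ===== level rings =====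

/-- `ℤ[X] → ZHat[X]/(Xⁿ-1)` canonical map -/
abbrev levelMk (n : ℕ+) : Polynomial ZHat →+* CycModN ZHat n :=
  Ideal.Quotient.mk (Ideal.span {(X : Polynomial ZHat) ^ (n : ℕ) - 1})

lemma levelMk_eq_zero_iff (n : ℕ+) (f : Polynomial ZHat) :
    levelMk n f = 0 ↔ (X : Polynomial ZHat) ^ (n : ℕ) - 1 ∣ f := by
  rw [Ideal.Quotient.eq_zero_iff_mem, Ideal.mem_span_singleton]

lemma tGen_eq (n : ℕ+) : tGen ZHat n = levelMk n X := rfl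

lemma cycTransition_levelMk {m n : ℕ+} (h : (m : ℕ) ∣ (n : ℕ)) (f : Polynomial ZHat) :
    cycTransition ZHat h (levelMk n f) = levelMk m f :=
  Ideal.Quotient.factor_mk _ _

lemma levelMk_surjective (n : ℕ+) : Function.Surjective (levelMk n) :=
  Ideal.Quotient.mk_surjective

/-- a ring hom out of a polynomial ring is an eval₂ -/
lemma ringHom_poly_eq_eval₂ {R S : Type} [CommRing R] [CommRing S]
    (φ : Polynomial R →+* S) (p : Polynomial R) :
    φ p = eval₂ (φ.comp C) (φ X) p := by
  conv_lhs => rw [← Polynomial.eval₂_C_X (p := p)]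
  exact Polynomial.hom_eval₂ _ _ _ _

-- ===== the exponents =====

/-- the `n`-th exponent of `v` -/
def cv (v : ZHat) (n : ℕ+) : ℕ := (v.1 n).val

lemma cv_eq {v : ZHat} {m n : ℕ+} (h : (m : ℕ) ∣ (n : ℕ)) :
    cv v m = cv v n % (m : ℕ) := by
  unfold cv
  rw [ZHat.apply_of_dvd v h, ZMod.val_natCast]

lemma cv_exists_decomp {v : ZHat} {m n : ℕ+} (h : (m : ℕ) ∣ (n : ℕ)) :
    ∃ q, cv v n = cv v m + (m : ℕ) * q := by
  refine ⟨cv v n / (m : ℕ), ?_⟩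
  rw [cv_eq h]
  exact (Nat.mod_add_div _ _).symm

lemma tGen_pow_cv {v : ZHat} {m n : ℕ+} (h : (m : ℕ) ∣ (n : ℕ)) :
    tGen ZHat m ^ cv v n = tGen ZHat m ^ cv v m := by
  rw [pow_eq_pow_mod _ (tGen_pow_eq_one ZHat m), cv_eq h,
    ← pow_eq_pow_mod _ (tGen_pow_eq_one ZHat m)]

-- ===== components of the completed ring =====

lemma CCR.mul_apply (x y : CompletedCycRing ZHat) (n : ℕ+) : (x * y).1 n = x.1 n * y.1 n := rfl
lemma CCR.one_apply (n : ℕ+) : (1 : CompletedCycRing ZHat).1 n = 1 := rfl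
lemma CCR.zero_apply (n : ℕ+) : (0 : CompletedCycRing ZHat).1 n = 0 := rfl
lemma CCR.sub_apply (x y : CompletedCycRing ZHat) (n : ℕ+) : (x - y).1 n = x.1 n - y.1 n := rfl
lemma CCR.add_apply (x y : CompletedCycRing ZHat) (n : ℕ+) : (x + y).1 n = x.1 n + y.1 n := rfl

lemma CCR.ext' {x y : CompletedCycRing ZHat} (h : ∀ n : ℕ+, x.1 n = y.1 n) : x = y :=
  Subtype.ext (funext h)

lemma intPolyEmb_apply (f : Polynomial ℤ) (n : ℕ+) :
    (intPolyEmb ZHat f).1 n = levelMk n (f.map (Int.castRingHom ZHat)) := rfl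

lemma substPow_apply (v : ZHat) (g : Polynomial ℤ) (n : ℕ+) :
    (substPow ZHat v g).1 n = Polynomial.aeval (tGen ZHat n ^ cv v n) g := rfl

lemma intPolyEmb_X_pow_sub_one (m : ℕ) (n : ℕ+) :
    (intPolyEmb ZHat ((X : Polynomial ℤ) ^ m - 1)).1 n = tGen ZHat n ^ m - 1 := by
  rw [intPolyEmb_apply]
  simp only [Polynomial.map_sub, Polynomial.map_pow, Polynomial.map_X, Polynomial.map_one]
  rw [map_sub, map_pow, map_one, tGen_eq]

lemma substPow_X_pow_sub_one (v : ZHat) (m : ℕ) (n : ℕ+) :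
    (substPow ZHat v ((X : Polynomial ℤ) ^ m - 1)).1 n = (tGen ZHat n ^ m) ^ cv v n - 1 := by
  rw [substPow_apply]
  simp only [map_sub, map_pow, Polynomial.aeval_X, map_one]
  rw [← pow_mul, ← pow_mul, mul_comm m (cv v n)]

-- ===== the substitution endomorphism at each level =====

/-- substitution `t ↦ t^c` on `ZHat[t]/(tⁿ-1)` -/
noncomputable def sigmaLevel (n : ℕ+) (c : ℕ) : CycModN ZHat n →+* CycModN ZHat n :=
  Ideal.Quotient.lift _ (eval₂RingHom ((levelMk n).comp C) (tGen ZHat n ^ c)) (by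
    intro a ha
    rw [Ideal.mem_span_singleton] at ha
    obtain ⟨b, rfl⟩ := ha
    rw [coe_eval₂RingHom, eval₂_mul, eval₂_sub, eval₂_pow, eval₂_one, eval₂_X]
    rw [← pow_mul, mul_comm c (n : ℕ), pow_mul, tGen_pow_eq_one, one_pow, sub_self, zero_mul])

lemma sigmaLevel_mk (n : ℕ+) (c : ℕ) (p : Polynomial ZHat) :
    sigmaLevel n c (levelMk n p) = eval₂ ((levelMk n).comp C) (tGen ZHat n ^ c) p :=
  Ideal.Quotient.lift_mk _ _ _

lemma sigmaLevel_tGen (n : ℕ+) (c : ℕ) : sigmaLevel n c (tGen ZHat n) = tGen ZHat n ^ c := by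
  rw [tGen_eq, sigmaLevel_mk, eval₂_X]
  rfl

/-- underlying function of `sigmaHom` -/
noncomputable def sigmaFun (v : ZHatˣ) (x : CompletedCycRing ZHat) : CompletedCycRing ZHat :=
  ⟨fun n => sigmaLevel n (cv (v : ZHat) n) (x.1 n), by
    intro m n h
    show cycTransition ZHat h (sigmaLevel n (cv (v : ZHat) n) (x.1 n))
        = sigmaLevel m (cv (v : ZHat) m) (x.1 m)
    obtain ⟨f, hf⟩ := levelMk_surjective n (x.1 n)
    have hxm : x.1 m = levelMk m f := by rw [← x.2 m n h, ← hf, cycTransition_levelMk]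
    rw [← hf, hxm, sigmaLevel_mk, sigmaLevel_mk, Polynomial.hom_eval₂]
    have h1 : (cycTransition ZHat h).comp ((levelMk n).comp C) = (levelMk m).comp C := by
      ext a
      · simp only [RingHom.comp_apply, cycTransition_levelMk]
    have h2 : cycTransition ZHat h (tGen ZHat n ^ cv (v : ZHat) n)
        = tGen ZHat m ^ cv (v : ZHat) m := by
      rw [map_pow, cycTransition_tGen, tGen_pow_cv h]
    rw [h1, h2]⟩

lemma sigmaFun_apply (v : ZHatˣ) (x : CompletedCycRing ZHat) (n : ℕ+) :
    (sigmaFun v x).1 n = sigmaLevel n (cv (v : ZHat) n) (x.1 n) := rfl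

/-- the substitution `t ↦ t^v` as a ring endomorphism of the completed cyclic ring -/
noncomputable def sigmaHom (v : ZHatˣ) : CompletedCycRing ZHat →+* CompletedCycRing ZHat where
  toFun := sigmaFun v
  map_one' := CCR.ext' fun n => by
    rw [sigmaFun_apply, CCR.one_apply]
    exact map_one _
  map_mul' x y := CCR.ext' fun n => by
    rw [sigmaFun_apply, CCR.mul_apply, CCR.mul_apply, sigmaFun_apply, sigmaFun_apply, map_mul]
  map_zero' := CCR.ext' fun n => by
    rw [sigmaFun_apply, CCR.zero_apply]
    exact map_zero _
  map_add' x y := CCR.ext' fun n => by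
    rw [sigmaFun_apply, CCR.add_apply, CCR.add_apply, sigmaFun_apply, sigmaFun_apply, map_add]

lemma sigmaHom_apply (v : ZHatˣ) (x : CompletedCycRing ZHat) (n : ℕ+) :
    (sigmaHom v x).1 n = sigmaLevel n (cv (v : ZHat) n) (x.1 n) := rfl

/-- σ_v ∘ ι = substPow v -/
lemma sigmaHom_intPolyEmb (v : ZHatˣ) (f : Polynomial ℤ) :
    sigmaHom v (intPolyEmb ZHat f) = substPow ZHat (v : ZHat) f := by
  apply CCR.ext'
  intro n
  rw [sigmaHom_apply, intPolyEmb_apply, substPow_apply, sigmaLevel_mk, Polynomial.eval₂_map,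
    Polynomial.aeval_def]
  congr 1

/-- σ_v ∘ substPow v⁻¹ = ι -/
lemma sigmaHom_substPow_inv (v : ZHatˣ) (f : Polynomial ℤ) :
    sigmaHom v (substPow ZHat ((v⁻¹ : ZHatˣ) : ZHat) f) = intPolyEmb ZHat f := by
  apply CCR.ext'
  intro n
  rw [sigmaHom_apply, substPow_apply, intPolyEmb_apply, Polynomial.aeval_def,
    Polynomial.hom_eval₂]
  have hx : sigmaLevel n (cv (v : ZHat) n) (tGen ZHat n ^ cv ((v⁻¹ : ZHatˣ) : ZHat) n)
      = tGen ZHat n := by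
    rw [map_pow, sigmaLevel_tGen, ← pow_mul]
    have hval : (cv (v : ZHat) n * cv ((v⁻¹ : ZHatˣ) : ZHat) n) % (n : ℕ) = 1 % (n : ℕ) := by
      have h1 : (v : ZHat).1 n * ((v⁻¹ : ZHatˣ) : ZHat).1 n = 1 := by
        rw [← ZHat.mul_apply]
        norm_cast
        rw [mul_inv_cancel]
        rfl
      have h2 := congrArg ZMod.val h1
      rw [ZMod.val_mul, ZMod.val_one_eq_one_mod] at h2
      exact h2
    rw [pow_eq_pow_mod _ (tGen_pow_eq_one ZHat n), hval,
      ← pow_eq_pow_mod _ (tGen_pow_eq_one ZHat n), pow_one]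
  rw [hx, ringHom_poly_eq_eval₂ (levelMk n) (f.map (Int.castRingHom ZHat)),
    Polynomial.eval₂_map, ← tGen_eq]
  congr 1
  exact Subsingleton.elim _ _

-- ===== reduction of coefficients mod j =====

/-- the projection `ZHat → ZMod j` -/
def zhatProj (j : ℕ+) : ZHat →+* ZMod j :=
  (Pi.evalRingHom (fun n : ℕ+ => ZMod n) j).comp (ZHatSubring.subtype)

lemma zhatProj_apply (j : ℕ+) (a : ZHat) : zhatProj j a = a.1 j := rfl

/-- coefficientwise reduction `ZHat[t]/(tᵏ-1) → (ZMod j)[t]/(tᵏ-1)` -/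
noncomputable def reduceLevel (k j : ℕ+) : CycModN ZHat k →+* CycModN (ZMod j) k :=
  Ideal.Quotient.lift _
    ((Ideal.Quotient.mk (Ideal.span {(X : Polynomial (ZMod j)) ^ (k : ℕ) - 1})).comp
      (mapRingHom (zhatProj j))) (by
    intro a ha
    rw [Ideal.mem_span_singleton] at ha
    obtain ⟨b, rfl⟩ := ha
    rw [RingHom.comp_apply, Ideal.Quotient.eq_zero_iff_mem, Ideal.mem_span_singleton,
      coe_mapRingHom, Polynomial.map_mul, Polynomial.map_sub, Polynomial.map_pow,
      Polynomial.map_X, Polynomial.map_one]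
    exact Dvd.intro _ rfl)

lemma reduceLevel_mk (k j : ℕ+) (p : Polynomial ZHat) :
    reduceLevel k j (levelMk k p) = Ideal.Quotient.mk _ (p.map (zhatProj j)) :=
  Ideal.Quotient.lift_mk _ _ _

/-- Elements of `ZHat[t]/(tᵏ-1)` divisible by every positive integer vanish. -/
lemma eq_zero_of_forall_dvd (k : ℕ+) (y : CycModN ZHat k)
    (h : ∀ j : ℕ+, ∃ z, y = ((j : ℕ) : CycModN ZHat k) * z) : y = 0 := by
  obtain ⟨f, rfl⟩ := levelMk_surjective k y
  have hmonic : ((X : Polynomial ZHat) ^ (k : ℕ) - 1).Monic := by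
    have := Polynomial.monic_X_pow_sub_C (1 : ZHat) k.ne_zero
    rwa [map_one] at this
  set r := f %ₘ ((X : Polynomial ZHat) ^ (k : ℕ) - 1) with hr
  have hfr : levelMk k f = levelMk k r := by
    conv_lhs => rw [← Polynomial.modByMonic_add_div f ((X : Polynomial ZHat) ^ (k : ℕ) - 1)]
    rw [map_add, map_mul, ← hr]
    have h0 : levelMk k ((X : Polynomial ZHat) ^ (k : ℕ) - 1) = 0 :=
      (levelMk_eq_zero_iff _ _).2 dvd_rfl
    rw [h0, zero_mul, add_zero]
  have hrcoeff : ∀ i : ℕ, r.coeff i = 0 := by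
    intro i
    apply ZHat.ext'
    intro j
    rw [ZHat.zero_apply, ← zhatProj_apply]
    by_cases hj : (j : ℕ) = 1
    · have : Subsingleton (ZMod (j : ℕ)) := by rw [hj]; infer_instance
      exact Subsingleton.elim _ _
    · haveI : Fact (1 < (j : ℕ)) := ⟨lt_of_le_of_ne j.one_le (Ne.symm hj)⟩
      have hredzero : (r.map (zhatProj j)) = 0 := by
        obtain ⟨z, hz⟩ := h j
        obtain ⟨g, rfl⟩ := levelMk_surjective k z
        have hcast0 : ((j : ℕ) : CycModN (ZMod j) k) = 0 := by
          have h1 := map_natCast ((Ideal.Quotient.mk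
            (Ideal.span {(X : Polynomial (ZMod j)) ^ (k : ℕ) - 1})).comp C) (j : ℕ)
          rw [ZMod.natCast_self, map_zero] at h1
          exact h1.symm
        have hy0 : reduceLevel k j (levelMk k r) = 0 := by
          rw [← hfr, hz, map_mul, map_natCast, hcast0, zero_mul]
        rw [reduceLevel_mk, Ideal.Quotient.eq_zero_iff_mem, Ideal.mem_span_singleton] at hy0
        have hdeg : (r.map (zhatProj j)).degree
            < ((X : Polynomial (ZMod j)) ^ (k : ℕ) - 1).degree := by
          have h2 : ((X : Polynomial (ZMod j)) ^ (k : ℕ) - 1).degree = (k : ℕ) := by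
            rw [← Polynomial.C_1, Polynomial.degree_X_pow_sub_C k.pos]
          have h3 : ((X : Polynomial ZHat) ^ (k : ℕ) - 1).degree = (k : ℕ) := by
            rw [← Polynomial.C_1, Polynomial.degree_X_pow_sub_C k.pos]
          calc (r.map (zhatProj j)).degree ≤ r.degree := Polynomial.degree_map_le
            _ < _ := by rw [h2, ← h3, hr]; exact Polynomial.degree_modByMonic_lt f hmonic
        obtain ⟨cpoly, hc⟩ := hy0
        by_contra hne
        have hc0 : cpoly ≠ 0 := by
          rintro rfl
          rw [mul_zero] at hc
          exact hne hc
        have hmonic2 : ((X : Polynomial (ZMod j)) ^ (k : ℕ) - 1).Monic := by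
          have := Polynomial.monic_X_pow_sub_C (1 : ZMod j) k.ne_zero
          rwa [map_one] at this
        have := Polynomial.Monic.degree_mul (p := cpoly) hmonic2
        rw [mul_comm] at hc
        rw [hc, this] at hdeg
        have hle : ((X : Polynomial (ZMod j)) ^ (k : ℕ) - 1).degree
            ≤ cpoly.degree + ((X : Polynomial (ZMod j)) ^ (k : ℕ) - 1).degree :=
          le_add_of_nonneg_left (by
            rw [Polynomial.zero_le_degree_iff]
            exact hc0)
        exact absurd hdeg (not_lt.2 hle)
      rw [← Polynomial.coeff_map, hredzero, Polynomial.coeff_zero]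
  have hr0 : r = 0 := Polynomial.ext fun i => by rw [hrcoeff i, Polynomial.coeff_zero]
  rw [hfr, hr0, map_zero]

-- ===== regularity of X^m - 1 in the completed ring =====

lemma X_pow_sub_one_regular (m : ℕ+) {x : CompletedCycRing ZHat}
    (hx : intPolyEmb ZHat ((X : Polynomial ℤ) ^ (m : ℕ) - 1) * x = 0) : x = 0 := by
  apply CCR.ext'
  intro k
  rw [CCR.zero_apply]
  apply eq_zero_of_forall_dvd
  intro j
  set N : ℕ+ := k * m * j with hN
  have hNcoe : (N : ℕ) = (k : ℕ) * (m : ℕ) * (j : ℕ) := rfl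
  have hmN : (m : ℕ) ∣ (N : ℕ) := ⟨(k : ℕ) * (j : ℕ), by rw [hNcoe]; ring⟩
  have hkN : (k : ℕ) ∣ (N : ℕ) := ⟨(m : ℕ) * (j : ℕ), by rw [hNcoe]; ring⟩
  have hcomp := congrArg (fun y : CompletedCycRing ZHat => y.1 N) hx
  simp only [CCR.mul_apply, CCR.zero_apply, intPolyEmb_X_pow_sub_one] at hcomp
  obtain ⟨f, hf⟩ := levelMk_surjective N (x.1 N)
  have hsub : levelMk N ((X : Polynomial ZHat) ^ (m : ℕ) - 1) = tGen ZHat N ^ (m : ℕ) - 1 := by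
    rw [map_sub, map_pow, map_one, tGen_eq]
  have hzero : levelMk N (((X : Polynomial ZHat) ^ (m : ℕ) - 1) * f) = 0 := by
    rw [map_mul, hsub, hf, hcomp]
  have hdvd := (levelMk_eq_zero_iff _ _).1 hzero
  set G : Polynomial ZHat :=
    ∑ i ∈ Finset.range ((k : ℕ) * (j : ℕ)), ((X : Polynomial ZHat) ^ (m : ℕ)) ^ i with hG
  have hfact : ((X : Polynomial ZHat) ^ (m : ℕ) - 1) * G = (X : Polynomial ZHat) ^ (N : ℕ) - 1 := by
    rw [hG, mul_geom_sum, ← pow_mul]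
    congr 2
    rw [hNcoe]; ring
  obtain ⟨q, hq⟩ := hdvd
  have hmonicm : ((X : Polynomial ZHat) ^ (m : ℕ) - 1).Monic := by
    have := Polynomial.monic_X_pow_sub_C (1 : ZHat) m.ne_zero
    rwa [map_one] at this
  have hfGq : f = G * q := by
    have h5 : ((X : Polynomial ZHat) ^ (m : ℕ) - 1) * (f - G * q) = 0 := by
      rw [mul_sub, hq, ← mul_assoc, hfact, sub_self]
    have h6 := (hmonicm.mul_right_eq_zero_iff).1 h5
    rwa [sub_eq_zero] at h6
  have hxk : x.1 k = levelMk k G * levelMk k q := by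
    rw [← x.2 k N hkN, ← hf, hfGq, cycTransition_levelMk, map_mul]
  have hs : (tGen ZHat k ^ (m : ℕ)) ^ (k : ℕ) = 1 := by
    rw [← pow_mul, mul_comm, pow_mul, tGen_pow_eq_one, one_pow]
  have hmkG : levelMk k G
      = ((j : ℕ) : CycModN ZHat k) * ∑ i ∈ Finset.range (k : ℕ), (tGen ZHat k ^ (m : ℕ)) ^ i := by
    rw [hG, map_sum]
    have hterm : ∀ i, levelMk k (((X : Polynomial ZHat) ^ (m : ℕ)) ^ i)
        = (tGen ZHat k ^ (m : ℕ)) ^ i := fun i => by rw [map_pow, map_pow, tGen_eq]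
    rw [Finset.sum_congr rfl fun i _ => hterm i]
    have hind : (k : ℕ) * (j : ℕ) = 0 + (j : ℕ) * (k : ℕ) := by ring
    rw [hind, geom_sum_shift hs]
    simp
  exact ⟨levelMk k q * ∑ i ∈ Finset.range (k : ℕ), (tGen ZHat k ^ (m : ℕ)) ^ i, by
    rw [hxk, hmkG]; ring⟩

/-- cancellation by `ι (X^m - 1)` -/
lemma intPolyEmb_X_pow_cancel (m : ℕ+) {a b : CompletedCycRing ZHat}
    (h : intPolyEmb ZHat ((X : Polynomial ℤ) ^ (m : ℕ) - 1) * a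
       = intPolyEmb ZHat ((X : Polynomial ℤ) ^ (m : ℕ) - 1) * b) : a = b := by
  have h2 : intPolyEmb ZHat ((X : Polynomial ℤ) ^ (m : ℕ) - 1) * (a - b) = 0 := by
    rw [mul_sub, h, sub_self]
  have := X_pow_sub_one_regular m h2
  rwa [sub_eq_zero] at this

/-- cancellation by `ι f` for `f` dividing `X^m - 1` -/
lemma intPolyEmb_cancel_of_dvd {f : Polynomial ℤ} (m : ℕ+)
    (hf : f ∣ (X : Polynomial ℤ) ^ (m : ℕ) - 1) {a b : CompletedCycRing ZHat}
    (h : intPolyEmb ZHat f * a = intPolyEmb ZHat f * b) : a = b := by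
  obtain ⟨g, hg⟩ := hf
  apply intPolyEmb_X_pow_cancel m
  rw [hg, map_mul]
  calc intPolyEmb ZHat f * intPolyEmb ZHat g * a
      = intPolyEmb ZHat g * (intPolyEmb ZHat f * a) := by ring
    _ = intPolyEmb ZHat g * (intPolyEmb ZHat f * b) := by rw [h]
    _ = intPolyEmb ZHat f * intPolyEmb ZHat g * b := by ring

-- ===== the unit (t^{vm}-1)/(t^m-1) =====

lemma mu_exists (v : ZHat) (n : ℕ+) :
    ∃ b : ZHat, ((n : ℕ) : ZHat) * b = v - ((cv v n : ℕ) : ZHat) := by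
  apply ZHat.exists_div
  rw [ZHat.sub_apply, ZHat.natCast_apply]
  show v.1 n - (((v.1 n).val : ℕ) : ZMod n) = 0
  rw [ZMod.natCast_val, ZMod.cast_id, sub_self]

/-- profinite correction scalar: `mu v n = (v - cv v n)/n` -/
noncomputable def mu (v : ZHat) (n : ℕ+) : ZHat := Classical.choose (mu_exists v n)

lemma mu_spec (v : ZHat) (n : ℕ+) :
    ((n : ℕ) : ZHat) * mu v n = v - ((cv v n : ℕ) : ZHat) :=
  Classical.choose_spec (mu_exists v n)

lemma mu_compat {v : ZHat} {k n : ℕ+} (h : (k : ℕ) ∣ (n : ℕ)) {q : ℕ}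
    (hq : cv v n = cv v k + (k : ℕ) * q) :
    mu v k = ((q : ℕ) : ZHat) + (((n : ℕ) / (k : ℕ) : ℕ) : ZHat) * mu v n := by
  apply ZHat.natCast_mul_cancel (j := k)
  have h2 := mu_spec v n
  have h3 : ((cv v n : ℕ) : ZHat) = ((cv v k : ℕ) : ZHat)
      + ((k : ℕ) : ZHat) * ((q : ℕ) : ZHat) := by
    rw [hq]; push_cast; ring
  have h4 : ((k : ℕ) : ZHat) * (((n : ℕ) / (k : ℕ) : ℕ) : ZHat) = ((n : ℕ) : ZHat) := by
    rw [← Nat.cast_mul, Nat.mul_div_cancel' h]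
  rw [mu_spec, mul_add, ← mul_assoc, h4, h2, h3]
  ring

/-- constants in the level rings -/
noncomputable abbrev mkConst (n : ℕ+) : ZHat →+* CycModN ZHat n := (levelMk n).comp C

lemma cycTransition_mkConst {k n : ℕ+} (h : (k : ℕ) ∣ (n : ℕ)) (a : ZHat) :
    cycTransition ZHat h (mkConst n a) = mkConst k a :=
  cycTransition_levelMk h (C a)

/-- the `n`-th component of `(t^{vm}-1)/(t^m-1)` -/
noncomputable def gLevel (v : ZHat) (m : ℕ) (n : ℕ+) : CycModN ZHat n :=
  (∑ i ∈ Finset.range (cv v n), (tGen ZHat n ^ m) ^ i)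
    + mkConst n (mu v n) * ∑ i ∈ Finset.range (n : ℕ), (tGen ZHat n ^ m) ^ i

lemma tGen_pow_pow_eq_one (n : ℕ+) (m : ℕ) : (tGen ZHat n ^ m) ^ (n : ℕ) = 1 := by
  rw [← pow_mul, mul_comm, pow_mul, tGen_pow_eq_one, one_pow]

/-- the element `(t^{vm}-1)/(t^m-1)` of the completed ring -/
noncomputable def gElem (v : ZHat) (m : ℕ) : CompletedCycRing ZHat :=
  ⟨fun n => gLevel v m n, by
    intro k n h
    show cycTransition ZHat h (gLevel v m n) = gLevel v m k
    set s := tGen ZHat k ^ m with hs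
    have hpow : cycTransition ZHat h (tGen ZHat n ^ m) = s := by
      rw [map_pow, cycTransition_tGen]
    have hsum : ∀ c : ℕ, cycTransition ZHat h (∑ i ∈ Finset.range c, (tGen ZHat n ^ m) ^ i)
        = ∑ i ∈ Finset.range c, s ^ i := by
      intro c
      rw [map_sum]
      exact Finset.sum_congr rfl fun i _ => by rw [map_pow, hpow]
    have hsk : s ^ (k : ℕ) = 1 := tGen_pow_pow_eq_one k m
    obtain ⟨q, hq⟩ := cv_exists_decomp (v := v) h
    have hshift1 : (∑ i ∈ Finset.range (cv v n), s ^ i)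
        = (∑ i ∈ Finset.range (cv v k), s ^ i)
          + ((q : ℕ) : CycModN ZHat k) * ∑ i ∈ Finset.range (k : ℕ), s ^ i := by
      rw [hq, mul_comm (k : ℕ) q, geom_sum_shift hsk]
    have hshift2 : (∑ i ∈ Finset.range (n : ℕ), s ^ i)
        = (((n : ℕ) / (k : ℕ) : ℕ) : CycModN ZHat k) * ∑ i ∈ Finset.range (k : ℕ), s ^ i := by
      have hn : (n : ℕ) = 0 + ((n : ℕ) / (k : ℕ)) * (k : ℕ) := by
        rw [zero_add, Nat.div_mul_cancel h]
      conv_lhs => rw [hn]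
      rw [geom_sum_shift hsk]
      simp
    have hmu : mkConst k (mu v k) = ((q : ℕ) : CycModN ZHat k)
        + (((n : ℕ) / (k : ℕ) : ℕ) : CycModN ZHat k) * mkConst k (mu v n) := by
      rw [mu_compat h hq, map_add, map_mul, map_natCast, map_natCast]
    unfold gLevel
    rw [map_add, map_mul, hsum, hsum, cycTransition_mkConst h, hshift1, hshift2, hmu]
    ring⟩

lemma gElem_apply (v : ZHat) (m : ℕ) (n : ℕ+) : (gElem v m).1 n = gLevel v m n := rfl

lemma gElem_spec (v : ZHat) (m : ℕ) :
    intPolyEmb ZHat ((X : Polynomial ℤ) ^ m - 1) * gElem v m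
      = substPow ZHat v ((X : Polynomial ℤ) ^ m - 1) := by
  apply CCR.ext'
  intro n
  rw [CCR.mul_apply, intPolyEmb_X_pow_sub_one, substPow_X_pow_sub_one, gElem_apply]
  unfold gLevel
  set s := tGen ZHat n ^ m with hs
  have h1 : (s - 1) * ∑ i ∈ Finset.range (cv v n), s ^ i = s ^ (cv v n) - 1 :=
    mul_geom_sum s (cv v n)
  have h2 : (s - 1) * ∑ i ∈ Finset.range (n : ℕ), s ^ i = 0 := by
    rw [mul_geom_sum, tGen_pow_pow_eq_one, sub_self]
  calc (s - 1) * ((∑ i ∈ Finset.range (cv v n), s ^ i)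
        + mkConst n (mu v n) * ∑ i ∈ Finset.range (n : ℕ), s ^ i)
      = (s - 1) * (∑ i ∈ Finset.range (cv v n), s ^ i)
        + mkConst n (mu v n) * ((s - 1) * ∑ i ∈ Finset.range (n : ℕ), s ^ i) := by ring
    _ = s ^ (cv v n) - 1 := by rw [h1, h2, mul_zero, add_zero]

lemma gElem_isUnit (v : ZHatˣ) (m : ℕ+) : IsUnit (gElem (v : ZHat) (m : ℕ)) := by
  have E := gElem_spec (v : ZHat) (m : ℕ)
  have E' := gElem_spec ((v⁻¹ : ZHatˣ) : ZHat) (m : ℕ)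
  have h1 := congrArg (sigmaHom v) E'
  rw [map_mul, sigmaHom_substPow_inv, sigmaHom_intPolyEmb, ← E] at h1
  apply IsUnit.of_mul_eq_one (sigmaHom v (gElem ((v⁻¹ : ZHatˣ) : ZHat) (m : ℕ)))
  apply intPolyEmb_X_pow_cancel m
  rw [mul_one]
  calc intPolyEmb ZHat ((X : Polynomial ℤ) ^ (m : ℕ) - 1)
        * (gElem (v : ZHat) (m : ℕ) * sigmaHom v (gElem ((v⁻¹ : ZHatˣ) : ZHat) (m : ℕ)))
      = (intPolyEmb ZHat ((X : Polynomial ℤ) ^ (m : ℕ) - 1) * gElem (v : ZHat) (m : ℕ))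
        * sigmaHom v (gElem ((v⁻¹ : ZHatˣ) : ZHat) (m : ℕ)) := by ring
    _ = intPolyEmb ZHat ((X : Polynomial ℤ) ^ (m : ℕ) - 1) := h1

-- ===== substitution as a ring hom in the polynomial =====

noncomputable def substHomv (v : ZHat) : Polynomial ℤ →+* CompletedCycRing ZHat where
  toFun := substPow ZHat v
  map_one' := CCR.ext' fun n => by rw [substPow_apply, map_one, CCR.one_apply]
  map_mul' f g := CCR.ext' fun n => by
    rw [substPow_apply, CCR.mul_apply, substPow_apply, substPow_apply, map_mul]
  map_zero' := CCR.ext' fun n => by rw [substPow_apply, map_zero, CCR.zero_apply]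
  map_add' f g := CCR.ext' fun n => by
    rw [substPow_apply, CCR.add_apply, substPow_apply, substPow_apply, map_add]

lemma substHomv_apply (v : ZHat) (f : Polynomial ℤ) : substHomv v f = substPow ZHat v f := rfl

-- ===== main construction =====

lemma key_lemma (v : ZHatˣ) : ∀ m : ℕ, 1 ≤ m →
    ∃ u : CompletedCycRing ZHat, IsUnit u ∧
      substPow ZHat (v : ZHat) (cyclotomic m ℤ) = intPolyEmb ZHat (cyclotomic m ℤ) * u := by
  intro m
  induction m using Nat.strong_induction_on with
  | _ m IH =>
    intro hm
    have hm0 : m ≠ 0 := by omega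
    choose! u hu using IH
    have hu1 : ∀ d, d < m → 1 ≤ d → IsUnit (u d) := fun d h h' => (hu d h h').1
    have hu2 : ∀ d, d < m → 1 ≤ d →
        substPow ZHat (v : ZHat) (cyclotomic d ℤ)
          = intPolyEmb ZHat (cyclotomic d ℤ) * u d := fun d h h' => (hu d h h').2
    set pd := m.properDivisors with hpd
    set P : Polynomial ℤ := ∏ d ∈ pd, cyclotomic d ℤ with hP
    have hmem : ∀ d ∈ pd, d < m ∧ 1 ≤ d := by
      intro d hd
      obtain ⟨hdvd, hlt⟩ := Nat.mem_properDivisors.1 hd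
      refine ⟨hlt, ?_⟩
      rcases Nat.eq_zero_or_pos d with h0 | h1
      · exact absurd (h0 ▸ hdvd) (by simpa [h0] using fun hh => hm0 (by simpa using hh))
      · exact h1
    have hprod : cyclotomic m ℤ * P = (X : Polynomial ℤ) ^ m - 1 := by
      have h1 := prod_cyclotomic_eq_X_pow_sub_one (show 0 < m by omega) ℤ
      rw [← Nat.insert_self_properDivisors hm0,
        Finset.prod_insert Nat.self_notMem_properDivisors] at h1
      exact h1
    set U : CompletedCycRing ZHat := ∏ d ∈ pd, u d with hUdef
    have hPu : substPow ZHat (v : ZHat) P = intPolyEmb ZHat P * U := by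
      rw [← substHomv_apply, hP, map_prod, map_prod]
      rw [Finset.prod_congr rfl (fun d hd => by
        rw [substHomv_apply, hu2 d (hmem d hd).1 (hmem d hd).2])]
      rw [Finset.prod_mul_distrib]
    have hU : IsUnit U := by
      refine Finset.prod_induction _ IsUnit (fun a b ha hb => ha.mul hb) isUnit_one ?_
      intro d hd
      exact hu1 d (hmem d hd).1 (hmem d hd).2
    set mp : ℕ+ := ⟨m, hm⟩ with hmp
    have hmpc : (mp : ℕ) = m := rfl
    have e1 : substPow ZHat (v : ZHat) ((X : Polynomial ℤ) ^ m - 1)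
        = substPow ZHat (v : ZHat) (cyclotomic m ℤ) * (intPolyEmb ZHat P * U) := by
      rw [← hprod, ← substHomv_apply, map_mul, substHomv_apply, substHomv_apply, hPu]
    have e2 : substPow ZHat (v : ZHat) ((X : Polynomial ℤ) ^ m - 1)
        = intPolyEmb ZHat ((X : Polynomial ℤ) ^ m - 1) * gElem (v : ZHat) m :=
      (gElem_spec _ m).symm
    have e3 : intPolyEmb ZHat ((X : Polynomial ℤ) ^ m - 1)
        = intPolyEmb ZHat (cyclotomic m ℤ) * intPolyEmb ZHat P := by
      rw [← hprod, map_mul]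
    have e4 : substPow ZHat (v : ZHat) (cyclotomic m ℤ) * (intPolyEmb ZHat P * U)
        = intPolyEmb ZHat (cyclotomic m ℤ) * intPolyEmb ZHat P * gElem (v : ZHat) m := by
      rw [← e1, e2, e3]
    obtain ⟨Uu, hUu⟩ := hU
    have hUw : U * (↑Uu⁻¹ : CompletedCycRing ZHat) = 1 := by
      rw [← hUu]
      exact Uu.mul_inv
    refine ⟨gElem (v : ZHat) m * (↑Uu⁻¹ : CompletedCycRing ZHat),
      (gElem_isUnit v mp).mul (Units.isUnit _), ?_⟩
    apply intPolyEmb_cancel_of_dvd (f := P) mp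
      ⟨cyclotomic m ℤ, by rw [hmpc, ← hprod]; ring⟩
    linear_combination (↑Uu⁻¹ : CompletedCycRing ZHat) * e4
      - (substPow ZHat (v : ZHat) (cyclotomic m ℤ) * intPolyEmb ZHat P) * hUw

/-- For every `m ≥ 1` and every unit `v` of `Ẑ`, `Φ_m(t^v)` lies in the
principal ideal `(Φ_m(t))` of `Ẑ[[t^Ẑ]]`, and the unique `u` with `Φ_m(t^v) = Φ_m(t)·u`
is a unit of `Ẑ[[t^Ẑ]]`. -/
theorem cyclotomic_substPow_div_cyclotomic_isUnit (m : ℕ) (hm : 1 ≤ m) (v : ZHatˣ) :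
    (∃! u : CompletedCycRing ZHat,
      substPow ZHat (v : ZHat) (cyclotomic m ℤ) = intPolyEmb ZHat (cyclotomic m ℤ) * u) ∧
    (∀ u : CompletedCycRing ZHat,
      substPow ZHat (v : ZHat) (cyclotomic m ℤ) = intPolyEmb ZHat (cyclotomic m ℤ) * u →
        IsUnit u) := by
  obtain ⟨u, huU, huE⟩ := key_lemma v m hm
  have hdvd : cyclotomic m ℤ ∣ (X : Polynomial ℤ) ^ ((⟨m, hm⟩ : ℕ+) : ℕ) - 1 :=
    cyclotomic.dvd_X_pow_sub_one m ℤ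
  have hcancel : ∀ y : CompletedCycRing ZHat,
      substPow ZHat (v : ZHat) (cyclotomic m ℤ) = intPolyEmb ZHat (cyclotomic m ℤ) * y →
        y = u := fun y hy =>
    intPolyEmb_cancel_of_dvd ⟨m, hm⟩ hdvd (hy.symm.trans huE)
  exact ⟨⟨u, huE, hcancel⟩, fun y hy => (hcancel y hy) ▸ huU⟩
end
end
end

section
/- Let f(t), g(t) ∈ ℤ[t] be polynomials and v a unit of ℤ̂, and suppose that the equality of ideals (f(t)) = (g(t^v)) holds in ℤ̂[[t^ℤ̂]]. Then for every m ≥ 1, the m-th cyclotomic polynomial Φ_m(t) divides f(t) in ℤ[t] if and only if it divides g(t) in ℤ[t]; moreover, if Φ_m(t) divides f(t), then the equality of ideals ((f/Φ_m)(t)) = ((g/Φ_m)(t^v)) holds in ℤ̂[[t^ℤ̂]]. -/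
open Polynomial

set_option synthInstance.maxHeartbeats 1000000
set_option maxHeartbeats 1000000

noncomputable section
noncomputable section

-- ===================== Auxiliary development =====================

namespace ProfAux

open Polynomial

/-- Powers agree when exponents are congruent, given `x ^ n = 1`. -/
lemma pow_congr {M : Type*} [Monoid M] {x : M} {n : ℕ} (hx : x ^ n = 1) {a b : ℕ}
    (h : a % n = b % n) : x ^ a = x ^ b := by
  rw [pow_eq_pow_mod a hx, pow_eq_pow_mod b hx, h]

/-- Projection to the `n`-th component as a ring hom. -/
def zproj (n : ℕ+) : ZHat →+* ZMod n :=
  (Pi.evalRingHom _ n).comp (Subring.subtype ZHatSubring)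

lemma zproj_apply (x : ZHat) (n : ℕ+) : zproj n x = x.1 n := rfl

lemma zhat_natCast_comp (a : ℕ) (n : ℕ+) : ((a : ZHat)).1 n = (a : ZMod n) := by
  rw [← zproj_apply, map_natCast]

lemma zhat_intCast_comp (a : ℤ) (n : ℕ+) : ((a : ZHat)).1 n = (a : ZMod n) := by
  rw [← zproj_apply, map_intCast]

lemma zhat_intCast_injective : Function.Injective (fun a : ℤ => (a : ZHat)) := by
  intro a b hab
  have h : ∀ n : ℕ+, ((a - b : ℤ) : ZMod n) = 0 := by
    intro n
    have := congrArg (fun x : ZHat => x.1 n) hab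
    simp only [zhat_intCast_comp] at this
    push_cast
    rw [this]; ring
  have hd := (ZMod.intCast_zmod_eq_zero_iff_dvd (a-b) ((a-b).natAbs + 1)).mp
    (h ⟨(a-b).natAbs+1, Nat.succ_pos _⟩)
  by_contra hne
  have hab0 : a - b ≠ 0 := sub_ne_zero_of_ne hne
  have h1 : (((a-b).natAbs + 1 : ℕ) : ℤ) ∣ |a - b| := (dvd_abs _ _).mpr hd
  have h2 := Int.le_of_dvd (abs_pos.mpr hab0) h1
  rw [Int.abs_eq_natAbs] at h2
  omega

/-- An element of `Ẑ` divisible by every positive natural is zero. -/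
lemma zhat_eq_zero_of_forall_dvd {a : ZHat} (h : ∀ c : ℕ+, ∃ b : ZHat, a = ((c : ℕ) : ZHat) * b) :
    a = 0 := by
  ext n
  obtain ⟨b, hb⟩ := h n
  have := congrArg (fun x : ZHat => x.1 n) hb
  rw [this]
  show (((n:ℕ) : ZHat) * b).1 n = (0 : ZHat).1 n
  have hmul : (((n:ℕ) : ZHat) * b).1 n = ((n:ℕ) : ZHat).1 n * b.1 n := rfl
  rw [hmul, zhat_natCast_comp, ZMod.natCast_self, zero_mul]
  rfl

/-- Divisibility of integer polynomials by a monic polynomial descends from `Ẑ[X]`. -/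
lemma dvd_of_map_dvd {q p : Polynomial ℤ} (hq : q.Monic)
    (h : q.map (Int.castRingHom ZHat) ∣ p.map (Int.castRingHom ZHat)) : q ∣ p := by
  rw [← Polynomial.modByMonic_eq_zero_iff_dvd hq]
  rw [← Polynomial.modByMonic_eq_zero_iff_dvd (hq.map _)] at h
  rw [← Polynomial.map_modByMonic _ hq] at h
  have : (p %ₘ q).map (Int.castRingHom ZHat) = (0 : Polynomial ℤ).map (Int.castRingHom ZHat) := by
    simpa using h
  exact Polynomial.map_injective _ (fun a b hab => zhat_intCast_injective hab) this

end ProfAux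

namespace ProfAux
open Polynomial

lemma val_comp (z : ZHat) {m n : ℕ+} (h : (m : ℕ) ∣ (n : ℕ)) :
    (z.1 m).val = (z.1 n).val % (m : ℕ) := by
  haveI : NeZero (m : ℕ) := ⟨m.ne_zero⟩
  haveI : NeZero (n : ℕ) := ⟨n.ne_zero⟩
  have h2 : (z.1 m) = (((z.1 n).val : ℕ) : ZMod (m : ℕ)) := by
    rw [← z.2 m n h, ZMod.castHom_apply, ← ZMod.natCast_val]
  rw [h2, ZMod.val_natCast]

/-- `aeval (tGen ^ w) p = mk (p.comp (X ^ w))`. -/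
lemma aeval_tGen_pow (n : ℕ+) (w : ℕ) (p : Polynomial ZHat) :
    Polynomial.aeval (tGen ZHat n ^ w) p
      = Ideal.Quotient.mk (Ideal.span {(X : Polynomial ZHat) ^ (n : ℕ) - 1}) (p.comp (X ^ w)) := by
  have h0 : tGen ZHat n = Ideal.Quotient.mkₐ ZHat (Ideal.span {(X : Polynomial ZHat) ^ (n : ℕ) - 1}) X := rfl
  have h1 : tGen ZHat n ^ w
      = Ideal.Quotient.mkₐ ZHat (Ideal.span {(X : Polynomial ZHat) ^ (n : ℕ) - 1}) (X ^ w) := by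
    rw [h0, ← map_pow]
  rw [h1, Polynomial.aeval_algHom_apply, Ideal.Quotient.mkₐ_eq_mk, ← Polynomial.comp_eq_aeval]

/-- The substitution `t ↦ t^w` on `Ẑ[t]/(tⁿ-1)`. -/
def psiAux (n : ℕ+) (w : ℕ) : CycModN ZHat n →+* CycModN ZHat n :=
  Ideal.Quotient.lift _ ((Polynomial.aeval (tGen ZHat n ^ w)).toRingHom : Polynomial ZHat →+* CycModN ZHat n)
    (by
      intro a ha
      rw [Ideal.mem_span_singleton] at ha
      obtain ⟨c, rfl⟩ := ha
      have h0 : (tGen ZHat n ^ w) ^ (n : ℕ) = 1 := by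
        rw [← pow_mul, mul_comm, pow_mul, tGen_pow_eq_one, one_pow]
      simp [map_mul, map_sub, map_pow, h0])

lemma psiAux_mk (n : ℕ+) (w : ℕ) (p : Polynomial ZHat) :
    psiAux n w (Ideal.Quotient.mk _ p) = Polynomial.aeval (tGen ZHat n ^ w) p :=
  Ideal.Quotient.lift_mk _ _ _

lemma psiAux_tGen (n : ℕ+) (w : ℕ) : psiAux n w (tGen ZHat n) = tGen ZHat n ^ w := by
  show psiAux n w (Ideal.Quotient.mk _ X) = _
  rw [psiAux_mk, Polynomial.aeval_X]

lemma subHom_compat (z : ZHat) (x : CompletedCycRing ZHat) (m n : ℕ+) (h : (m:ℕ) ∣ (n:ℕ)) :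
    cycTransition ZHat h (psiAux n ((z.1 n).val) (x.1 n)) = psiAux m ((z.1 m).val) (x.1 m) := by
  obtain ⟨p, hp⟩ := Ideal.Quotient.mk_surjective (x.1 n)
  have hxm : x.1 m = Ideal.Quotient.mk _ p := by rw [← x.2 m n h, ← hp]; exact Ideal.Quotient.factor_mk _ _
  have hcong : tGen ZHat m ^ ((z.1 n).val) = tGen ZHat m ^ ((z.1 m).val) := by
    refine pow_congr (tGen_pow_eq_one ZHat m) ?_
    rw [val_comp z h, Nat.mod_mod_of_dvd _ dvd_rfl]
  rw [← hp, hxm, psiAux_mk, psiAux_mk, aeval_tGen_pow, cycTransition,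
    Ideal.Quotient.factor_mk, ← aeval_tGen_pow, hcong]

/-- The substitution `t ↦ t^z` endomorphism of the completed group ring. -/
def subHom (z : ZHat) : CompletedCycRing ZHat →+* CompletedCycRing ZHat :=
  RingHom.codRestrict
    (Pi.ringHom fun n => (psiAux n ((z.1 n).val)).comp
      ((Pi.evalRingHom _ n).comp (Subring.subtype (CompletedCycRing ZHat))))
    (CompletedCycRing ZHat)
    (fun x m n h => subHom_compat z x m n h)

lemma subHom_comp_apply (z : ZHat) (x : CompletedCycRing ZHat) (n : ℕ+) :
    (subHom z x).1 n = psiAux n ((z.1 n).val) (x.1 n) := rfl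

lemma substPow_comp_apply (z : ZHat) (g : Polynomial ℤ) (n : ℕ+) :
    (substPow ZHat z g).1 n = Polynomial.aeval (tGen ZHat n ^ (z.1 n).val) g := rfl

lemma intPolyEmb_comp_apply (p : Polynomial ℤ) (n : ℕ+) :
    (intPolyEmb ZHat p).1 n
      = Ideal.Quotient.mk (Ideal.span {(X : Polynomial ZHat) ^ (n : ℕ) - 1})
          (p.map (Int.castRingHom ZHat)) := rfl

lemma mul_comp_apply (x y : CompletedCycRing ZHat) (n : ℕ+) :
    ((x * y).1 n) = x.1 n * y.1 n := rfl

lemma subHom_substPow (z u : ZHat) (g : Polynomial ℤ) :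
    subHom z (substPow ZHat u g) = substPow ZHat (u * z) g := by
  apply Subtype.ext; funext n
  haveI : NeZero (n : ℕ) := ⟨n.ne_zero⟩
  show psiAux n ((z.1 n).val) ((substPow ZHat u g).1 n) = _
  rw [substPow_comp_apply, substPow_comp_apply]
  have h3 : psiAux n ((z.1 n).val) ((Polynomial.aeval (tGen ZHat n ^ (u.1 n).val)) g)
      = (Polynomial.aeval (psiAux n ((z.1 n).val) (tGen ZHat n ^ (u.1 n).val))) g :=
    (Polynomial.aeval_algHom_apply ((psiAux n ((z.1 n).val)).toIntAlgHom) _ g).symm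
  rw [h3, map_pow, psiAux_tGen, ← pow_mul]
  have h4 : tGen ZHat n ^ ((z.1 n).val * (u.1 n).val) = tGen ZHat n ^ (((u * z).1 n)).val := by
    refine pow_congr (tGen_pow_eq_one ZHat n) ?_
    show ((z.1 n).val * (u.1 n).val) % (n:ℕ) = ((u.1 n * z.1 n)).val % (n:ℕ)
    rw [ZMod.val_mul, Nat.mod_mod_of_dvd _ dvd_rfl, mul_comm]
  rw [h4]

lemma aeval_tGen (n : ℕ+) (g : Polynomial ℤ) :
    Polynomial.aeval (tGen ZHat n) g
      = Ideal.Quotient.mk (Ideal.span {(X : Polynomial ZHat) ^ (n : ℕ) - 1})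
          (g.map (Int.castRingHom ZHat)) := by
  have h1 : g.map (Int.castRingHom ZHat) = g.map (algebraMap ℤ ZHat) := rfl
  have h2 := Polynomial.aeval_map_algebraMap ZHat (tGen ZHat n) g
  rw [h1, ← h2]
  have := aeval_tGen_pow n 1 (g.map (algebraMap ℤ ZHat))
  rw [pow_one] at this
  rw [this, pow_one, Polynomial.comp_X]

lemma substPow_one (g : Polynomial ℤ) : substPow ZHat 1 g = intPolyEmb ZHat g := by
  apply Subtype.ext; funext n
  rw [substPow_comp_apply, intPolyEmb_comp_apply, ← aeval_tGen]
  have h1 : tGen ZHat n ^ (((1:ZHat)).1 n).val = tGen ZHat n := by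
    have h2 : (((1:ZHat)).1 n) = 1 := rfl
    rw [h2, ZMod.val_one_eq_one_mod]
    exact (pow_congr (tGen_pow_eq_one ZHat n)
      (by rw [Nat.mod_mod_of_dvd _ dvd_rfl])).trans (pow_one _)
  rw [h1]

/-- `substPow` as a ring hom in the polynomial variable. -/
def substPowHom (z : ZHat) : Polynomial ℤ →+* CompletedCycRing ZHat :=
  RingHom.codRestrict
    (Pi.ringHom fun n => ((Polynomial.aeval (tGen ZHat n ^ (z.1 n).val)).toRingHom : Polynomial ℤ →+* CycModN ZHat n))
    (CompletedCycRing ZHat)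
    (fun g => (substPow ZHat z g).2)

lemma substPowHom_eq (z : ZHat) (g : Polynomial ℤ) : substPowHom z g = substPow ZHat z g := rfl

lemma substPow_natCast_mul (z : ZHat) (m : ℕ) :
    substPow ZHat (z * ((m : ℕ) : ZHat)) (X - 1) = substPow ZHat z (X ^ m - 1) := by
  apply Subtype.ext; funext n
  haveI : NeZero (n : ℕ) := ⟨n.ne_zero⟩
  rw [substPow_comp_apply, substPow_comp_apply]
  simp only [map_sub, map_pow, Polynomial.aeval_X, map_one]
  rw [← pow_mul]
  congr 1
  refine pow_congr (tGen_pow_eq_one ZHat n) ?_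
  show ((z.1 n * ((m:ℕ):ZHat).1 n)).val % (n:ℕ) = ((z.1 n).val * m) % (n:ℕ)
  rw [zhat_natCast_comp, ZMod.val_mul, Nat.mod_mod_of_dvd _ dvd_rfl, ZMod.val_natCast,
    Nat.mul_mod, Nat.mod_mod_of_dvd _ dvd_rfl, ← Nat.mul_mod]

end ProfAux

namespace ProfAux
open Polynomial

/-- The geometric sum `1 + X + ... + X^(j-1)` in `Ẑ[X]`. -/
def geomS (j : ℕ) : Polynomial ZHat := ∑ i ∈ Finset.range j, X ^ i

lemma geomS_add (a b : ℕ) : geomS (a + b) = geomS a + X ^ a * geomS b := by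
  rw [geomS, Finset.sum_range_add, ← geomS]
  congr 1
  rw [geomS, Finset.mul_sum]
  exact Finset.sum_congr rfl fun i _ => (pow_add X a i)

lemma geomS_mul_X_sub_one (j : ℕ) : geomS j * (X - 1) = X ^ j - 1 := geom_sum_mul X j

section
variable (n : ℕ+)

local notation "mkn" => Ideal.Quotient.mk (Ideal.span {(X : Polynomial ZHat) ^ (n : ℕ) - 1})

lemma mkn_X_pow_n : (mkn (X ^ (n : ℕ)) : CycModN ZHat n) = 1 := by
  have := tGen_pow_eq_one ZHat n
  rw [tGen, ← map_pow] at this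
  exact this

lemma mkn_X_pow_mul (a : ℕ) (p : Polynomial ZHat) :
    mkn (X ^ a * p) = (mkn X) ^ a * mkn p := by rw [map_mul, map_pow]

lemma mkn_X_mul_geomS : mkn (X * geomS (n : ℕ)) = mkn (geomS (n : ℕ)) := by
  rw [Ideal.Quotient.eq, Ideal.mem_span_singleton]
  have : X * geomS (n:ℕ) - geomS (n:ℕ) = geomS (n:ℕ) * (X - 1) := by ring
  rw [this, geomS_mul_X_sub_one]

lemma mkn_X_pow_mul_geomS (a : ℕ) : mkn (X ^ a * geomS (n : ℕ)) = mkn (geomS (n : ℕ)) := by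
  induction a with
  | zero => simp
  | succ a ih =>
      have : (X : Polynomial ZHat) ^ (a+1) * geomS (n:ℕ) = X ^ a * (X * geomS (n:ℕ)) := by ring
      rw [this, map_mul, mkn_X_mul_geomS, ← map_mul, ih]

lemma mkn_geomS_nmul (q : ℕ) :
    mkn (geomS ((n : ℕ) * q)) = (q : CycModN ZHat n) * mkn (geomS (n : ℕ)) := by
  induction q with
  | zero => simp [geomS]
  | succ q ih =>
      rw [Nat.mul_succ, geomS_add, map_add, ih, mkn_X_pow_mul_geomS]
      push_cast
      ring

lemma mkn_geomS (s : ℕ) :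
    mkn (geomS s) = ((s / (n:ℕ) : ℕ) : CycModN ZHat n) * mkn (geomS (n : ℕ))
      + mkn (geomS (s % (n:ℕ))) := by
  conv_lhs => rw [← Nat.div_add_mod s (n:ℕ)]
  rw [geomS_add, map_add, mkn_geomS_nmul, mkn_X_pow_mul, pow_mul, ← map_pow, mkn_X_pow_n,
    one_pow, one_mul]
end

end ProfAux

namespace ProfAux
open Polynomial

lemma nat_div_add (V n k : ℕ) (hn : 0 < n) :
    V / n = (V % (n * k)) / n + (V / (n * k)) * k := by
  conv_lhs => rw [← Nat.mod_add_div V (n * k)]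
  have h1 : (n * k) * (V / (n * k)) = ((V / (n * k)) * k) * n := by ring
  rw [h1, Nat.add_mul_div_right _ _ hn]

/-- The correction coefficient `(z - z mod n)/n ∈ Ẑ`. -/
def gaussCoef (z : ZHat) (n : ℕ+) : ZHat :=
  ⟨fun k => (((z.1 (n * k)).val / (n : ℕ) : ℕ) : ZMod k), by
    intro k k' hk
    rw [map_natCast]
    show ((((z.1 (n * k')).val / (n : ℕ) : ℕ)) : ZMod k) = (((z.1 (n * k)).val / (n : ℕ) : ℕ) : ZMod k)
    have hdvd : ((n * k : ℕ+) : ℕ) ∣ ((n * k' : ℕ+) : ℕ) := by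
      rw [PNat.mul_coe, PNat.mul_coe]; exact mul_dvd_mul_left _ hk
    have hval : (z.1 (n * k)).val = (z.1 (n * k')).val % (((n * k : ℕ+)) : ℕ) :=
      val_comp z hdvd
    set V := (z.1 (n * k')).val
    have h2 : V / (n : ℕ) = (V % ((n:ℕ) * (k:ℕ))) / (n:ℕ) + (V / ((n:ℕ) * (k:ℕ))) * (k:ℕ) :=
      nat_div_add V (n:ℕ) (k:ℕ) n.pos
    rw [← PNat.mul_coe] at h2
    rw [hval, h2]
    push_cast
    simp⟩

end ProfAux

namespace ProfAux

lemma geomS_zero : geomS 0 = 0 := by simp [geomS]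

lemma cycTransition_mk {m n : ℕ+} (h : (m:ℕ) ∣ (n:ℕ)) (p : Polynomial ZHat) :
    cycTransition ZHat h (Ideal.Quotient.mk _ p) = Ideal.Quotient.mk _ p :=
  Ideal.Quotient.factor_mk _ _

lemma natCast_mk (m : ℕ+) (q : ℕ) :
    ((q : ℕ) : CycModN ZHat m)
      = Ideal.Quotient.mk (Ideal.span {(X : Polynomial ZHat) ^ (m : ℕ) - 1})
          (Polynomial.C ((q : ℕ) : ZHat)) := by
  rw [Polynomial.C_eq_natCast, map_natCast]

/-- The scalar compatibility identity for the Gauss element coefficients. -/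
lemma gaussCoef_compat (z : ZHat) {m n : ℕ+} (h : (m:ℕ) ∣ (n:ℕ)) :
    (((z.1 n).val / (m:ℕ) : ℕ) : ZHat) + gaussCoef z n * (((n:ℕ) / (m:ℕ) : ℕ) : ZHat)
      = gaussCoef z m := by
  apply Subtype.ext; funext k
  have hcomp : ((((z.1 n).val / (m:ℕ) : ℕ) : ZHat) + gaussCoef z n * (((n:ℕ)/(m:ℕ) : ℕ) : ZHat)).1 k
      = ((((z.1 n).val / (m:ℕ) : ℕ) : ZHat)).1 k + (gaussCoef z n).1 k * ((((n:ℕ)/(m:ℕ) : ℕ) : ZHat)).1 k := rfl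
  rw [hcomp, zhat_natCast_comp, zhat_natCast_comp]
  show _ = (((z.1 (m * k)).val / (m : ℕ) : ℕ) : ZMod k)
  have hgc : (gaussCoef z n).1 k = (((z.1 (n * k)).val / (n : ℕ) : ℕ) : ZMod k) := rfl
  rw [hgc]
  set V := (z.1 (n * k)).val with hV
  -- identify the values at smaller levels
  have hw' : (z.1 n).val = V % (n : ℕ) := by
    have hd : ((n : ℕ+) : ℕ) ∣ ((n * k : ℕ+) : ℕ) := by
      rw [PNat.mul_coe]; exact Dvd.intro _ rfl
    exact val_comp z hd
  have hmk : (z.1 (m * k)).val = V % ((m:ℕ) * (k:ℕ)) := by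
    have hd : ((m * k : ℕ+) : ℕ) ∣ ((n * k : ℕ+) : ℕ) := by
      rw [PNat.mul_coe, PNat.mul_coe]; exact mul_dvd_mul_right h _
    exact (val_comp z hd).trans (congrArg (fun t => (z.1 (n*k)).val % t) (PNat.mul_coe m k))
  rw [hw', hmk]
  -- now a pure arithmetic statement in `ZMod k`
  have e1 : (((V % ((m:ℕ)*(k:ℕ))) / (m:ℕ) : ℕ) : ZMod k) = ((V / (m:ℕ) : ℕ) : ZMod k) := by
    have h1 := nat_div_add V (m:ℕ) (k:ℕ) m.pos
    rw [h1]
    push_cast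
    simp
  have e2 : (((V % (n:ℕ)) / (m:ℕ) : ℕ) : ZMod k) + ((V / (n:ℕ) : ℕ) : ZMod k) * (((n:ℕ)/(m:ℕ) : ℕ) : ZMod k)
      = ((V / (m:ℕ) : ℕ) : ZMod k) := by
    have h3 : (m:ℕ) * ((n:ℕ)/(m:ℕ)) = (n:ℕ) := Nat.mul_div_cancel' h
    have h1 := nat_div_add V (m:ℕ) ((n:ℕ)/(m:ℕ)) m.pos
    rw [h3] at h1
    rw [h1]
    push_cast
    ring
  rw [e1, ← e2]

/-- The Gauss element: the global quotient `(t^z - 1)/(t - 1)` in `Ẑ[[t^Ẑ]]`. -/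
def gaussElt (z : ZHat) : CompletedCycRing ZHat :=
  ⟨fun n => Ideal.Quotient.mk (Ideal.span {(X : Polynomial ZHat) ^ (n : ℕ) - 1})
      (geomS ((z.1 n).val) + Polynomial.C (gaussCoef z n) * geomS (n : ℕ)), by
    intro m n h
    beta_reduce
    rw [cycTransition_mk h]
    rw [map_add, map_add, map_mul, map_mul, mkn_geomS m ((z.1 n).val), mkn_geomS m ((n:ℕ))]
    have hw : (z.1 n).val % (m:ℕ) = (z.1 m).val := (val_comp z h).symm
    have hn0 : (n:ℕ) % (m:ℕ) = 0 := Nat.mod_eq_zero_of_dvd h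
    rw [hw, hn0, geomS_zero, map_zero, add_zero]
    have h3 : (((z.1 n).val / (m:ℕ) : ℕ) : CycModN ZHat m)
        + Ideal.Quotient.mk _ (Polynomial.C (gaussCoef z n)) * ((((n:ℕ)/(m:ℕ) : ℕ) : CycModN ZHat m))
        = Ideal.Quotient.mk _ (Polynomial.C (gaussCoef z m)) := by
      rw [natCast_mk, natCast_mk, ← map_mul, ← Polynomial.C_mul, ← map_add, ← Polynomial.C_add,
        gaussCoef_compat z h]
    rw [← h3]
    ring⟩

end ProfAux

namespace ProfAux

lemma gauss_spec (z : ZHat) :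
    intPolyEmb ZHat (X - 1) * gaussElt z = substPow ZHat z (X - 1) := by
  apply Subtype.ext; funext n
  rw [mul_comp_apply, intPolyEmb_comp_apply, substPow_comp_apply]
  have hg : (gaussElt z).1 n
      = Ideal.Quotient.mk (Ideal.span {(X : Polynomial ZHat) ^ (n : ℕ) - 1})
          (geomS ((z.1 n).val) + Polynomial.C (gaussCoef z n) * geomS (n : ℕ)) := rfl
  have hmap : ((X : Polynomial ℤ) - 1).map (Int.castRingHom ZHat) = X - 1 := by
    simp
  have ht : tGen ZHat n ^ ((z.1 n).val)
      = Ideal.Quotient.mk (Ideal.span {(X : Polynomial ZHat) ^ (n : ℕ) - 1})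
          (X ^ ((z.1 n).val)) :=
    (map_pow (Ideal.Quotient.mk (Ideal.span {(X : Polynomial ZHat) ^ (n : ℕ) - 1})) X
      ((z.1 n).val)).symm
  have haev : (Polynomial.aeval (tGen ZHat n ^ ((z.1 n).val))) ((X : Polynomial ℤ) - 1)
      = Ideal.Quotient.mk (Ideal.span {(X : Polynomial ZHat) ^ (n : ℕ) - 1})
          (X ^ ((z.1 n).val) - 1) := by
    rw [map_sub, Polynomial.aeval_X, map_one, ht, map_sub, map_one]
  rw [hg, hmap, haev, ← map_mul, Ideal.Quotient.eq, Ideal.mem_span_singleton]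
  have hid : ((X : Polynomial ZHat) - 1) * (geomS ((z.1 n).val)
        + Polynomial.C (gaussCoef z n) * geomS (n : ℕ))
      - (X ^ ((z.1 n).val) - 1)
      = ((X : Polynomial ZHat) ^ (n:ℕ) - 1) * Polynomial.C (gaussCoef z n) := by
    have h1 := geomS_mul_X_sub_one ((z.1 n).val)
    have h2 := geomS_mul_X_sub_one (n : ℕ)
    linear_combination h1 + Polynomial.C (gaussCoef z n) * h2
  exact Dvd.intro _ hid.symm

/-- Monic divisors of `X^M - 1` give non-zero-divisors of the completed group ring. -/
lemma intPolyEmb_regular (M : ℕ+) {q : Polynomial ℤ} (hq : q.Monic)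
    (hdvd : q ∣ (X : Polynomial ℤ) ^ (M:ℕ) - 1) (x : CompletedCycRing ZHat)
    (hx : intPolyEmb ZHat q * x = 0) : x = 0 := by
  have key : ∀ n : ℕ+, (M:ℕ) ∣ (n:ℕ) → x.1 n = 0 := by
    intro n hMn
    obtain ⟨D, hD⟩ : q ∣ (X : Polynomial ℤ)^(n:ℕ) - 1 :=
      dvd_trans hdvd (X_pow_sub_one_dvd hMn)
    have hmonXn : ((X : Polynomial ZHat)^(n:ℕ) - 1).Monic := by
      have := Polynomial.monic_X_pow_sub_C (R := ZHat) 1 n.ne_zero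
      simpa using this
    -- step 1: divisibility by every positive natural
    have hcoef : ∀ c : ℕ+, ∃ u : CycModN ZHat n, x.1 n = (((c:ℕ) : CycModN ZHat n)) * u := by
      intro c
      set N : ℕ+ := n * c with hN
      have hxN : (intPolyEmb ZHat q).1 N * x.1 N = 0 := by
        rw [← mul_comp_apply, hx]; rfl
      obtain ⟨yN, hyN⟩ := Ideal.Quotient.mk_surjective (x.1 N)
      rw [intPolyEmb_comp_apply, ← hyN, ← map_mul] at hxN
      rw [Ideal.Quotient.eq_zero_iff_mem, Ideal.mem_span_singleton] at hxN
      obtain ⟨zp, hzp⟩ := hxN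
      -- X^N - 1 factors
      set S : Polynomial ZHat := ∑ j ∈ Finset.range (c:ℕ), ((X : Polynomial ZHat)^(n:ℕ))^j with hS
      have hfac : (X : Polynomial ZHat)^((N:ℕ)) - 1 = ((X:Polynomial ZHat)^(n:ℕ) - 1) * S := by
        rw [hS, mul_comm, geom_sum_mul, ← pow_mul, hN, PNat.mul_coe]
      have hXn : ((X:Polynomial ZHat)^(n:ℕ) - 1)
          = (q.map (Int.castRingHom ZHat)) * (D.map (Int.castRingHom ZHat)) := by
        have := congrArg (Polynomial.map (Int.castRingHom ZHat)) hD
        simpa using this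
      have hcancel : yN = (D.map (Int.castRingHom ZHat)) * S * zp := by
        have hreg := (hq.map (Int.castRingHom ZHat)).isRegular.left
        apply hreg
        show (q.map (Int.castRingHom ZHat)) * yN
          = (q.map (Int.castRingHom ZHat)) * ((D.map (Int.castRingHom ZHat)) * S * zp)
        rw [hzp, hfac, hXn]; ring
      -- push down to level n
      have hdnN : ((n:ℕ+) : ℕ) ∣ ((N:ℕ+) : ℕ) := by
        rw [hN, PNat.mul_coe]; exact dvd_mul_right _ _
      have hxn : x.1 n = cycTransition ZHat hdnN (x.1 N) := (x.2 n N hdnN).symm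
      rw [hxn, ← hyN, cycTransition_mk, hcancel]
      refine ⟨Ideal.Quotient.mk _ ((D.map (Int.castRingHom ZHat)) * zp), ?_⟩
      have hmkS : Ideal.Quotient.mk (Ideal.span {(X : Polynomial ZHat) ^ (n : ℕ) - 1}) S
          = (((c:ℕ) : CycModN ZHat n)) := by
        rw [hS, map_sum]
        have hterm : ∀ j ∈ Finset.range (c:ℕ),
            Ideal.Quotient.mk (Ideal.span {(X : Polynomial ZHat) ^ (n : ℕ) - 1})
              (((X : Polynomial ZHat)^(n:ℕ))^j) = 1 := by
          intro j _
          rw [map_pow, mkn_X_pow_n, one_pow]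
        rw [Finset.sum_congr rfl hterm, Finset.sum_const, Finset.card_range, nsmul_eq_mul,
          mul_one]
      have hre : (D.map (Int.castRingHom ZHat)) * S * zp
          = S * ((D.map (Int.castRingHom ZHat)) * zp) := by ring
      rw [hre, map_mul, hmkS]
    -- step 2: conclude that the component vanishes
    obtain ⟨y, hy⟩ := Ideal.Quotient.mk_surjective (x.1 n)
    have hr : ∀ c : ℕ+, ∃ s : Polynomial ZHat,
        y %ₘ ((X:Polynomial ZHat)^(n:ℕ) - 1) = ((c:ℕ) : ZHat) • s := by
      intro c
      obtain ⟨u, hu⟩ := hcoef c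
      obtain ⟨yu, hyu⟩ := Ideal.Quotient.mk_surjective u
      have hmk : Ideal.Quotient.mk (Ideal.span {(X : Polynomial ZHat) ^ (n : ℕ) - 1}) y
          = Ideal.Quotient.mk _ ((((c:ℕ):ZHat)) • yu) := by
        rw [hy, hu, ← hyu, natCast_mk, ← map_mul]
        congr 1
        rw [Polynomial.smul_eq_C_mul]
      rw [Ideal.Quotient.eq, Ideal.mem_span_singleton] at hmk
      refine ⟨yu %ₘ ((X:Polynomial ZHat)^(n:ℕ) - 1), ?_⟩
      rw [Polynomial.modByMonic_eq_of_dvd_sub hmonXn hmk, Polynomial.smul_modByMonic]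
    have hc : ∀ i : ℕ, (y %ₘ ((X:Polynomial ZHat)^(n:ℕ) - 1)).coeff i = 0 := by
      intro i
      apply zhat_eq_zero_of_forall_dvd
      intro c
      obtain ⟨s, hs⟩ := hr c
      exact ⟨s.coeff i, by rw [hs, Polynomial.coeff_smul, smul_eq_mul]⟩
    have hr0 : y %ₘ ((X:Polynomial ZHat)^(n:ℕ) - 1) = 0 := Polynomial.ext fun i => (hc i)
    have hmky : x.1 n = Ideal.Quotient.mk _ (y %ₘ ((X:Polynomial ZHat)^(n:ℕ) - 1)) := by
      conv_lhs => rw [← hy, ← Polynomial.modByMonic_add_div y ((X:Polynomial ZHat)^(n:ℕ) - 1)]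
      rw [map_add, map_mul]
      rw [show (Ideal.Quotient.mk (Ideal.span {(X : Polynomial ZHat) ^ (n : ℕ) - 1}))
        ((X:Polynomial ZHat)^(n:ℕ) - 1) = 0 from Ideal.Quotient.eq_zero_iff_mem.mpr
          (Ideal.subset_span rfl), zero_mul, add_zero]
    rw [hmky, hr0, map_zero]
  apply Subtype.ext; funext n
  have hd : (n:ℕ) ∣ ((n*M : ℕ+):ℕ) := by rw [PNat.mul_coe]; exact dvd_mul_right _ _
  have hMd : (M:ℕ) ∣ ((n*M : ℕ+):ℕ) := by rw [PNat.mul_coe]; exact dvd_mul_left _ _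
  have h0 : (0 : CompletedCycRing ZHat).1 n = 0 := rfl
  rw [h0, ← x.2 n (n*M) hd, key (n*M) hMd, map_zero]

end ProfAux

namespace ProfAux

lemma X_sub_one_monic : ((X : Polynomial ℤ) - 1).Monic := by
  have := Polynomial.monic_X_sub_C (1 : ℤ)
  simpa using this

lemma X_sub_one_dvd_pow_one : ((X : Polynomial ℤ) - 1) ∣ (X : Polynomial ℤ) ^ ((1:ℕ+):ℕ) - 1 := by
  norm_num

lemma gauss_isUnit (v : ZHatˣ) : IsUnit (gaussElt (v : ZHat)) := by
  have h1 := gauss_spec (((v⁻¹ : ZHatˣ)) : ZHat)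
  have h2 := congrArg (subHom (v : ZHat)) h1
  rw [map_mul] at h2
  have h3 : subHom (v:ZHat) (intPolyEmb ZHat (X - 1)) = substPow ZHat (v:ZHat) (X - 1) := by
    rw [← substPow_one ((X:Polynomial ℤ) - 1), subHom_substPow, one_mul]
  have h4 : subHom (v:ZHat) (substPow ZHat (((v⁻¹:ZHatˣ)):ZHat) (X - 1))
      = intPolyEmb ZHat (X - 1) := by
    rw [subHom_substPow, ← substPow_one ((X:Polynomial ℤ) - 1)]
    congr 1
    exact Units.inv_mul v
  rw [h3, h4, ← gauss_spec (v:ZHat)] at h2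
  have h5 : intPolyEmb ZHat (X - 1)
      * (gaussElt (v:ZHat) * subHom (v:ZHat) (gaussElt (((v⁻¹:ZHatˣ)):ZHat)) - 1) = 0 := by
    rw [mul_sub, mul_one, ← mul_assoc, h2, sub_self]
  have h6 := intPolyEmb_regular 1 X_sub_one_monic X_sub_one_dvd_pow_one _ h5
  rw [sub_eq_zero] at h6
  exact IsUnit.of_mul_eq_one _ h6

lemma exists_unit_prod {M : Type*} [CommMonoid M] (s : Finset ℕ) (f g : ℕ → M)
    (h : ∀ i ∈ s, ∃ u : M, IsUnit u ∧ f i = u * g i) :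
    ∃ u : M, IsUnit u ∧ ∏ i ∈ s, f i = u * ∏ i ∈ s, g i := by
  classical
  induction s using Finset.induction with
  | empty => exact ⟨1, isUnit_one, by simp⟩
  | insert a s hx ih =>
      obtain ⟨u, hu, hfu⟩ := h a (Finset.mem_insert_self a s)
      obtain ⟨U, hU, hP⟩ := ih (fun i hi => h i (Finset.mem_insert_of_mem hi))
      refine ⟨u * U, hu.mul hU, ?_⟩
      rw [Finset.prod_insert hx, Finset.prod_insert hx, hfu, hP]
      exact mul_mul_mul_comm u (g a) U (∏ i ∈ s, g i)

/-- `Φ_m(t^v)` is a unit multiple of `Φ_m(t)` in the completed group ring. -/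
lemma cyclo_assoc (v : ZHatˣ) : ∀ m : ℕ, 0 < m →
    ∃ u : CompletedCycRing ZHat, IsUnit u ∧
      substPow ZHat (v:ZHat) (cyclotomic m ℤ) = u * intPolyEmb ZHat (cyclotomic m ℤ) := by
  intro m
  induction m using Nat.strong_induction_on with
  | _ m ih =>
    intro hm
    have hgauss := congrArg (subHom (((m:ℕ)) : ZHat)) (gauss_spec (v : ZHat))
    rw [map_mul] at hgauss
    have hsub : subHom ((m:ℕ):ZHat) (substPow ZHat (v:ZHat) (X - 1))
        = substPow ZHat (v:ZHat) ((X:Polynomial ℤ)^m - 1) := by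
      rw [subHom_substPow, substPow_natCast_mul]
    have e1 : subHom ((m:ℕ):ZHat) (intPolyEmb ZHat (X - 1))
        = intPolyEmb ZHat ((X:Polynomial ℤ)^m - 1) := by
      rw [← substPow_one ((X:Polynomial ℤ) - 1), subHom_substPow, substPow_natCast_mul,
        substPow_one]
    rw [hsub, e1] at hgauss
    -- hgauss : substPow v (X^m-1) = intPolyEmb (X^m-1) * subHom m (gaussElt v)
    set Q : Polynomial ℤ := ∏ d ∈ m.divisors.erase m, cyclotomic d ℤ with hQ
    have hprod : (X:Polynomial ℤ)^m - 1 = cyclotomic m ℤ * Q := by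
      rw [hQ, Finset.mul_prod_erase m.divisors (fun d => cyclotomic d ℤ)
        (Nat.mem_divisors_self m hm.ne'), Polynomial.prod_cyclotomic_eq_X_pow_sub_one hm]
    obtain ⟨U, hU, hUeq⟩ := exists_unit_prod (m.divisors.erase m)
      (fun d => substPow ZHat (v:ZHat) (cyclotomic d ℤ))
      (fun d => intPolyEmb ZHat (cyclotomic d ℤ))
      (by
        intro d hd
        obtain ⟨hne, hdd⟩ := Finset.mem_erase.mp hd
        have hdvd : d ∣ m := (Nat.mem_divisors.mp hdd).1
        have hdpos : 0 < d := Nat.pos_of_mem_divisors hdd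
        have hlt : d < m := Nat.lt_of_le_of_ne (Nat.le_of_dvd hm hdvd) hne
        exact ih d hlt hdpos)
    have hs1 : substPow ZHat (v:ZHat) ((X:Polynomial ℤ)^m - 1)
        = substPow ZHat (v:ZHat) (cyclotomic m ℤ)
          * ∏ d ∈ m.divisors.erase m, substPow ZHat (v:ZHat) (cyclotomic d ℤ) := by
      conv_lhs => rw [hprod]
      rw [← substPowHom_eq, map_mul, map_prod]
      simp only [substPowHom_eq]
    have hs2 : intPolyEmb ZHat ((X:Polynomial ℤ)^m - 1)
        = intPolyEmb ZHat (cyclotomic m ℤ)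
          * ∏ d ∈ m.divisors.erase m, intPolyEmb ZHat (cyclotomic d ℤ) := by
      conv_lhs => rw [hprod]
      rw [map_mul, map_prod]
    have hQmap : intPolyEmb ZHat Q = ∏ d ∈ m.divisors.erase m, intPolyEmb ZHat (cyclotomic d ℤ) := by
      rw [hQ, map_prod]
    have hQmonic : Q.Monic := Polynomial.monic_prod_of_monic _ _ (fun d _ => Polynomial.cyclotomic.monic d ℤ)
    have hQdvd : Q ∣ (X:Polynomial ℤ)^(((⟨m, hm⟩ : ℕ+)):ℕ) - 1 := by
      show Q ∣ (X:Polynomial ℤ)^m - 1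
      exact Dvd.intro_left _ hprod.symm
    set σE := subHom ((m:ℕ):ZHat) (gaussElt (v:ZHat)) with hσE
    have hσEunit : IsUnit σE := (gauss_isUnit v).map _
    -- the cancellation identity
    have h0 : intPolyEmb ZHat Q
        * (substPow ZHat (v:ZHat) (cyclotomic m ℤ) * U - σE * intPolyEmb ZHat (cyclotomic m ℤ)) = 0 := by
      have c1 : intPolyEmb ZHat Q * (substPow ZHat (v:ZHat) (cyclotomic m ℤ) * U)
          = substPow ZHat (v:ZHat) ((X:Polynomial ℤ)^m - 1) := by
        rw [hs1, hUeq, hQmap]; ring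
      have c2 : intPolyEmb ZHat Q * (σE * intPolyEmb ZHat (cyclotomic m ℤ))
          = intPolyEmb ZHat ((X:Polynomial ℤ)^m - 1) * σE := by
        rw [hs2, hQmap]; ring
      rw [mul_sub, c1, c2, hgauss]
      ring
    have heq := sub_eq_zero.mp (intPolyEmb_regular ⟨m, hm⟩ hQmonic hQdvd _ h0)
    refine ⟨σE * ↑hU.unit⁻¹, hσEunit.mul (Units.isUnit _), ?_⟩
    calc substPow ZHat (v:ZHat) (cyclotomic m ℤ)
        = substPow ZHat (v:ZHat) (cyclotomic m ℤ) * (↑hU.unit * ↑hU.unit⁻¹) := by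
          rw [Units.mul_inv, mul_one]
      _ = (substPow ZHat (v:ZHat) (cyclotomic m ℤ) * U) * ↑hU.unit⁻¹ := by
          rw [hU.unit_spec]; ring
      _ = (σE * intPolyEmb ZHat (cyclotomic m ℤ)) * ↑hU.unit⁻¹ := by rw [heq]
      _ = (σE * ↑hU.unit⁻¹) * intPolyEmb ZHat (cyclotomic m ℤ) := by ring

end ProfAux

namespace ProfAux

lemma intPolyEmb_dvd_iff (M : ℕ+) {q : Polynomial ℤ} (hq : q.Monic)
    (hdvd : q ∣ (X:Polynomial ℤ)^((M:ℕ+):ℕ) - 1) (p : Polynomial ℤ) :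
    intPolyEmb ZHat q ∣ intPolyEmb ZHat p ↔ q ∣ p := by
  constructor
  · rintro ⟨x, hx⟩
    have hcomp : (intPolyEmb ZHat p).1 M = (intPolyEmb ZHat q).1 M * x.1 M := by
      rw [hx]; rfl
    obtain ⟨y, hy⟩ := Ideal.Quotient.mk_surjective (x.1 M)
    rw [intPolyEmb_comp_apply, intPolyEmb_comp_apply, ← hy, ← map_mul] at hcomp
    rw [Ideal.Quotient.eq, Ideal.mem_span_singleton] at hcomp
    obtain ⟨zp, hzp⟩ := hcomp
    apply dvd_of_map_dvd hq
    have hqmap : q.map (Int.castRingHom ZHat) ∣ (X:Polynomial ZHat)^((M:ℕ+):ℕ) - 1 := by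
      have h2 := Polynomial.map_dvd (Int.castRingHom ZHat) hdvd
      simpa using h2
    obtain ⟨D', hD'⟩ := hqmap
    refine ⟨y + D' * zp, ?_⟩
    calc p.map (Int.castRingHom ZHat)
        = q.map (Int.castRingHom ZHat) * y
          + (p.map (Int.castRingHom ZHat) - q.map (Int.castRingHom ZHat) * y) := by ring
      _ = q.map (Int.castRingHom ZHat) * y + ((X:Polynomial ZHat)^((M:ℕ+):ℕ) - 1) * zp := by
          rw [hzp]
      _ = q.map (Int.castRingHom ZHat) * (y + D' * zp) := by rw [hD']; ring
  · exact fun h => map_dvd _ h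

end ProfAux

open ProfAux in
theorem cyclotomic_dvd_iff_of_span_eq' (f g : Polynomial ℤ) (v : ZHatˣ)
    (hspan : Ideal.span {intPolyEmb ZHat f} = Ideal.span {substPow ZHat (v : ZHat) g})
    (m : ℕ) (hm : 1 ≤ m) :
    (cyclotomic m ℤ ∣ f ↔ cyclotomic m ℤ ∣ g) ∧
    (∀ f₁ g₁ : Polynomial ℤ, f = cyclotomic m ℤ * f₁ → g = cyclotomic m ℤ * g₁ →
      Ideal.span {intPolyEmb ZHat f₁} = Ideal.span {substPow ZHat (v : ZHat) g₁}) := by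
  have hm0 : 0 < m := hm
  have hΦmonic : (cyclotomic m ℤ).Monic := Polynomial.cyclotomic.monic m ℤ
  have hΦdvd : cyclotomic m ℤ ∣ (X:Polynomial ℤ)^(((⟨m, hm0⟩ : ℕ+)):ℕ) - 1 := by
    show cyclotomic m ℤ ∣ (X:Polynomial ℤ)^m - 1
    exact Polynomial.cyclotomic.dvd_X_pow_sub_one m ℤ
  obtain ⟨u, hu, hassoc⟩ := cyclo_assoc v m hm0
  -- mutual memberships
  have hFG : ∃ a, intPolyEmb ZHat f = a * substPow ZHat (v:ZHat) g := by
    have hmem : intPolyEmb ZHat f ∈ Ideal.span {substPow ZHat (v:ZHat) g} := by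
      rw [← hspan]; exact Ideal.subset_span rfl
    obtain ⟨a, ha⟩ := Ideal.mem_span_singleton'.mp hmem
    exact ⟨a, ha.symm⟩
  have hGF : ∃ b, substPow ZHat (v:ZHat) g = b * intPolyEmb ZHat f := by
    have hmem : substPow ZHat (v:ZHat) g ∈ Ideal.span {intPolyEmb ZHat f} := by
      rw [hspan]; exact Ideal.subset_span rfl
    obtain ⟨b, hb⟩ := Ideal.mem_span_singleton'.mp hmem
    exact ⟨b, hb.symm⟩
  constructor
  · constructor
    · intro hΦf
      obtain ⟨b, hb⟩ := hGF
      have hPF : intPolyEmb ZHat (cyclotomic m ℤ) ∣ intPolyEmb ZHat f := map_dvd _ hΦf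
      have hPG : intPolyEmb ZHat (cyclotomic m ℤ) ∣ substPow ZHat (v:ZHat) g := by
        rw [hb]; exact hPF.mul_left b
      have hPG2 : substPow ZHat (v:ZHat) (cyclotomic m ℤ) ∣ substPow ZHat (v:ZHat) g := by
        obtain ⟨w, hw⟩ := hPG
        refine ⟨↑hu.unit⁻¹ * w, ?_⟩
        rw [hassoc, hw]
        symm
        calc u * intPolyEmb ZHat (cyclotomic m ℤ) * (↑hu.unit⁻¹ * w)
            = (↑hu.unit * ↑hu.unit⁻¹) * (intPolyEmb ZHat (cyclotomic m ℤ) * w) := by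
              rw [hu.unit_spec]; ring
          _ = intPolyEmb ZHat (cyclotomic m ℤ) * w := by rw [Units.mul_inv, one_mul]
      have h3 := map_dvd (subHom (((v⁻¹ : ZHatˣ)) : ZHat)) hPG2
      rw [subHom_substPow, subHom_substPow, Units.mul_inv, substPow_one, substPow_one] at h3
      exact (intPolyEmb_dvd_iff ⟨m, hm0⟩ hΦmonic hΦdvd g).mp h3
    · intro hΦg
      obtain ⟨a, ha⟩ := hFG
      have hPG : substPow ZHat (v:ZHat) (cyclotomic m ℤ) ∣ substPow ZHat (v:ZHat) g := by
        obtain ⟨g1, hg1⟩ := hΦg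
        refine ⟨substPow ZHat (v:ZHat) g1, ?_⟩
        rw [hg1, ← substPowHom_eq, map_mul, substPowHom_eq, substPowHom_eq]
      have hPG' : intPolyEmb ZHat (cyclotomic m ℤ) ∣ substPow ZHat (v:ZHat) g := by
        refine dvd_trans ?_ hPG
        rw [hassoc]
        exact Dvd.intro_left u rfl
      have hPF : intPolyEmb ZHat (cyclotomic m ℤ) ∣ intPolyEmb ZHat f := by
        rw [ha]; exact hPG'.mul_left a
      exact (intPolyEmb_dvd_iff ⟨m, hm0⟩ hΦmonic hΦdvd f).mp hPF
  · intro f₁ g₁ hf hg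
    obtain ⟨a, ha⟩ := hFG
    obtain ⟨b, hb⟩ := hGF
    have hF : intPolyEmb ZHat f = intPolyEmb ZHat (cyclotomic m ℤ) * intPolyEmb ZHat f₁ := by
      rw [hf, map_mul]
    have hG : substPow ZHat (v:ZHat) g
        = (u * intPolyEmb ZHat (cyclotomic m ℤ)) * substPow ZHat (v:ZHat) g₁ := by
      rw [hg, ← substPowHom_eq, map_mul, substPowHom_eq, substPowHom_eq, hassoc]
    have hreg := intPolyEmb_regular (⟨m, hm0⟩ : ℕ+) hΦmonic hΦdvd
    -- first cancellation : f₁ = (a*u) * g₁ side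
    have h1 : intPolyEmb ZHat f₁ = a * (u * substPow ZHat (v:ZHat) g₁) := by
      have e : intPolyEmb ZHat (cyclotomic m ℤ) * (a * (u * substPow ZHat (v:ZHat) g₁))
          = a * substPow ZHat (v:ZHat) g := by rw [hG]; ring
      have h0 : intPolyEmb ZHat (cyclotomic m ℤ)
          * (intPolyEmb ZHat f₁ - a * (u * substPow ZHat (v:ZHat) g₁)) = 0 := by
        rw [mul_sub, e, ← hF, ha, sub_self]
      exact sub_eq_zero.mp (hreg _ h0)
    have h2 : u * substPow ZHat (v:ZHat) g₁ = b * intPolyEmb ZHat f₁ := by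
      have e : intPolyEmb ZHat (cyclotomic m ℤ) * (u * substPow ZHat (v:ZHat) g₁)
          = substPow ZHat (v:ZHat) g := by rw [hG]; ring
      have e2 : intPolyEmb ZHat (cyclotomic m ℤ) * (b * intPolyEmb ZHat f₁)
          = b * intPolyEmb ZHat f := by rw [hF]; ring
      have h0 : intPolyEmb ZHat (cyclotomic m ℤ)
          * (u * substPow ZHat (v:ZHat) g₁ - b * intPolyEmb ZHat f₁) = 0 := by
        rw [mul_sub, e, e2, hb, sub_self]
      exact sub_eq_zero.mp (hreg _ h0)
    apply le_antisymm
    · rw [Ideal.span_singleton_le_span_singleton]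
      -- need : substPow v g₁ ∣ intPolyEmb f₁
      exact ⟨a * u, by rw [h1]; ring⟩
    · rw [Ideal.span_singleton_le_span_singleton]
      -- need : intPolyEmb f₁ ∣ substPow v g₁
      refine ⟨↑hu.unit⁻¹ * b, ?_⟩
      calc substPow ZHat (v:ZHat) g₁
          = (↑hu.unit⁻¹ * ↑hu.unit) * substPow ZHat (v:ZHat) g₁ := by
            rw [Units.inv_mul, one_mul]
        _ = ↑hu.unit⁻¹ * (u * substPow ZHat (v:ZHat) g₁) := by rw [hu.unit_spec]; ring
        _ = ↑hu.unit⁻¹ * (b * intPolyEmb ZHat f₁) := by rw [h2]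
        _ = intPolyEmb ZHat f₁ * (↑hu.unit⁻¹ * b) := by ring

/-- If `(f(t)) = (g(t^v))` in `Ẑ[[t^Ẑ]]` then, for every `m ≥ 1`,
`Φ_m(t) ∣ f(t)` in `ℤ[t]` iff `Φ_m(t) ∣ g(t)` in `ℤ[t]`; and if `Φ_m(t)` divides `f(t)` then
`((f/Φ_m)(t)) = ((g/Φ_m)(t^v))` in `Ẑ[[t^Ẑ]]`. -/
theorem cyclotomic_dvd_iff_of_span_eq (f g : Polynomial ℤ) (v : ZHatˣ)
    (hspan : Ideal.span {intPolyEmb ZHat f} = Ideal.span {substPow ZHat (v : ZHat) g})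
    (m : ℕ) (hm : 1 ≤ m) :
    (cyclotomic m ℤ ∣ f ↔ cyclotomic m ℤ ∣ g) ∧
    (∀ f₁ g₁ : Polynomial ℤ, f = cyclotomic m ℤ * f₁ → g = cyclotomic m ℤ * g₁ →
      Ideal.span {intPolyEmb ZHat f₁} = Ideal.span {substPow ZHat (v : ZHat) g₁}) :=
  cyclotomic_dvd_iff_of_span_eq' f g v hspan m hm
end
end
end

section
/- Let p be a prime and m, k ≥ 1. Then the annihilator of Φ_m(t)^k in ℤ_p[[t^ℤ̂]] is contained in the principal ideal generated by Φ_m(t): every g ∈ ℤ_p[[t^ℤ̂]] with Φ_m(t)^k · g = 0 is of the form g = Φ_m(t)·h for some h ∈ ℤ_p[[t^ℤ̂]]. -/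
open Polynomial

set_option synthInstance.maxHeartbeats 1000000
set_option maxHeartbeats 1000000

noncomputable section
noncomputable section

lemma padic_eq_zero_of_pow_dvd (p : ℕ) [Fact p.Prime] (c : PadicInt p)
    (h : ∀ j : ℕ, ∃ d, c = (p : PadicInt p) ^ j * d) : c = 0 := by
  have hp1 : (1:ℝ) < p := by exact_mod_cast (Fact.out : p.Prime).one_lt
  have hle : ∀ j : ℕ, ‖c‖ ≤ ((p:ℝ)⁻¹) ^ j := by
    intro j
    obtain ⟨d, hd⟩ := h j
    calc ‖c‖ = ‖(p : PadicInt p)‖ ^ j * ‖d‖ := by rw [hd, norm_mul, norm_pow]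
    _ ≤ ((p:ℝ)⁻¹) ^ j * 1 := by
        rw [PadicInt.norm_p]
        exact mul_le_mul_of_nonneg_left (PadicInt.norm_le_one d) (by positivity)
    _ = ((p:ℝ)⁻¹) ^ j := mul_one _
  have htend : Filter.Tendsto (fun j : ℕ => ((p:ℝ)⁻¹) ^ j) Filter.atTop (nhds 0) :=
    tendsto_pow_atTop_nhds_zero_of_lt_one (by positivity) (by
      rw [inv_lt_one_iff₀]; right; exact hp1)
  have h0 : ‖c‖ ≤ 0 := ge_of_tendsto' htend hle
  exact norm_eq_zero.mp (le_antisymm h0 (norm_nonneg c))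

lemma cyc_eq_zero_of_pow_dvd (p : ℕ) [Fact p.Prime] (n : ℕ+) (a : CycModN (PadicInt p) n)
    (h : ∀ j : ℕ, ∃ b, a = (p : CycModN (PadicInt p) n) ^ j * b) : a = 0 := by
  obtain ⟨x, rfl⟩ := Ideal.Quotient.mk_surjective a
  set R := PadicInt p
  set f : Polynomial R := X ^ (n : ℕ) - 1 with hf
  have hfm : f.Monic := by
    have := monic_X_pow_sub_C (1 : R) (n.pos.ne')
    rwa [map_one] at this
  have hmod : ∀ j : ℕ, ∃ y : Polynomial R, x %ₘ f = (p : R) ^ j • y := by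
    intro j
    obtain ⟨b, hb⟩ := h j
    obtain ⟨y, rfl⟩ := Ideal.Quotient.mk_surjective b
    have hmkp : (p : CycModN R n) ^ j * Ideal.Quotient.mk _ y
        = Ideal.Quotient.mk _ ((p : Polynomial R) ^ j * y) := by
      rw [map_mul, map_pow, map_natCast]
    rw [hmkp, Ideal.Quotient.eq, Ideal.mem_span_singleton] at hb
    obtain ⟨z, hz⟩ := hb
    have hx : x = (p : Polynomial R) ^ j * y + f * z := by
      rw [← hz]; ring
    refine ⟨y %ₘ f, ?_⟩
    have h1 : (p : Polynomial R) ^ j * y = (p : R) ^ j • y := by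
      rw [smul_eq_C_mul, ← C_eq_natCast, ← map_pow]
    rw [hx, add_modByMonic, h1, smul_modByMonic,
      (modByMonic_eq_zero_iff_dvd hfm).mpr (dvd_mul_right f z), add_zero]
  have hr : x %ₘ f = 0 := by
    ext i
    refine padic_eq_zero_of_pow_dvd p _ (fun j => ?_)
    obtain ⟨y, hy⟩ := hmod j
    exact ⟨(y).coeff i, by rw [hy, coeff_smul, smul_eq_mul]⟩
  rw [Ideal.Quotient.eq_zero_iff_mem, Ideal.mem_span_singleton]
  exact (modByMonic_eq_zero_iff_dvd hfm).mp hr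

/-- For a prime `p` and `m, k ≥ 1`, the annihilator of `Φ_m(t)^k` in
`ℤ_p[[t^Ẑ]]` is contained in the principal ideal `(Φ_m(t))`. -/
theorem ann_cyclotomic_pow_le_span_cyclotomic
    (p : ℕ) [Fact p.Prime] (m k : ℕ) (hm : 1 ≤ m) (hk : 1 ≤ k)
    (g : CompletedCycRing (PadicInt p))
    (hg : (intPolyEmb (PadicInt p) (cyclotomic m ℤ)) ^ k * g = 0) :
    ∃ h : CompletedCycRing (PadicInt p),
      g = intPolyEmb (PadicInt p) (cyclotomic m ℤ) * h := by
  have compat : ∀ (a b : ℕ+) (hab : (a : ℕ) ∣ (b : ℕ)),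
      cycTransition (PadicInt p) hab (g.1 b) = g.1 a := g.2
  suffices hkey : ∀ n : ℕ+, (m : ℕ) ∣ (n : ℕ) → g.1 n = 0 by
    have hg0 : g = 0 := by
      apply Subtype.ext
      funext n
      have hdvd : (n : ℕ) ∣ ((n * ⟨m, hm⟩ : ℕ+) : ℕ) := by
        show (n : ℕ) ∣ (n : ℕ) * m; exact Dvd.intro m rfl
      have h0 : g.1 (n * ⟨m, hm⟩) = 0 := by
        apply hkey
        show m ∣ (n : ℕ) * m
        exact Dvd.intro_left (n : ℕ) rfl
      have h1 := compat n (n * ⟨m, hm⟩) hdvd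
      rw [h0, map_zero] at h1
      rw [← h1]
      rfl
    refine ⟨0, ?_⟩
    rw [hg0, mul_zero]
  intro n hmn
  apply cyc_eq_zero_of_pow_dvd p n
  intro j
  have hppos : 0 < p := (Fact.out : p.Prime).pos
  set P : ℕ+ := ⟨p, hppos⟩ with hP
  set N : ℕ+ := n * P ^ j with hNdef
  have hNn : ((N : ℕ)) = (n : ℕ) * p ^ j := by
    rw [hNdef, PNat.mul_coe, PNat.pow_coe]; rfl
  have hnN : (n : ℕ) ∣ (N : ℕ) := ⟨p ^ j, hNn⟩
  have hmN : (m : ℕ) ∣ (N : ℕ) := hmn.trans hnN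
  obtain ⟨x, hx⟩ := Ideal.Quotient.mk_surjective (g.1 N)
  -- extract the hypothesis at level N
  have h1 := congrFun (congrArg Subtype.val hg) N
  simp only [MulMemClass.coe_mul, SubmonoidClass.coe_pow, ZeroMemClass.coe_zero,
    Pi.mul_apply, Pi.pow_apply, Pi.zero_apply] at h1
  have hemb : (intPolyEmb (PadicInt p) (cyclotomic m ℤ)).1 N
      = Ideal.Quotient.mk (Ideal.span {(X : Polynomial (PadicInt p)) ^ (N : ℕ) - 1})
        (cyclotomic m (PadicInt p)) := by
    show Ideal.Quotient.mk _ ((cyclotomic m ℤ).map (Int.castRingHom (PadicInt p))) = _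
    rw [map_cyclotomic_int]
  rw [hemb, ← hx, ← map_pow, ← map_mul, Ideal.Quotient.eq_zero_iff_mem,
    Ideal.mem_span_singleton] at h1
  -- h1 : X^N - 1 ∣ Φ^k * x
  set Φ : Polynomial (PadicInt p) := cyclotomic m (PadicInt p) with hΦdef
  have hΦX : Φ ∣ (X : Polynomial (PadicInt p)) ^ (N : ℕ) - 1 :=
    (cyclotomic.dvd_X_pow_sub_one m (PadicInt p)).trans (X_pow_sub_one_dvd hmN)
  obtain ⟨Cc, hCc⟩ := hΦX
  have hNpos : (N : ℕ) ≠ 0 := N.pos.ne'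
  have hXN : ((X : Polynomial (PadicInt p)) ^ (N : ℕ) - 1).Monic := by
    have := monic_X_pow_sub_C (1 : PadicInt p) hNpos
    rwa [map_one] at this
  have hCcM : Cc.Monic := (cyclotomic.monic m (PadicInt p)).of_mul_monic_left (hCc ▸ hXN)
  set φ : PadicInt p →+* ℚ_[p] := PadicInt.Coe.ringHom with hφdef
  have hsep : ((X : Polynomial ℚ_[p]) ^ (N : ℕ) - 1).Separable := by
    have hcast : ((N : ℕ) : ℚ_[p]) ≠ 0 := Nat.cast_ne_zero.mpr hNpos
    have := separable_X_pow_sub_C (1 : ℚ_[p]) hcast one_ne_zero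
    rwa [map_one] at this
  have hmapeq : (Φ.map φ) * (Cc.map φ) = (X : Polynomial ℚ_[p]) ^ (N : ℕ) - 1 := by
    rw [← Polynomial.map_mul, ← hCc]
    simp [Polynomial.map_sub, Polynomial.map_pow, Polynomial.map_one, Polynomial.map_X]
  have hcop : IsCoprime (Cc.map φ) ((Φ.map φ) ^ k) :=
    ((Polynomial.Separable.isCoprime (hmapeq ▸ hsep)).symm).pow_right
  have hdvdK : Cc.map φ ∣ (Φ.map φ) ^ k * x.map φ := by
    have h3 : Cc ∣ Φ ^ k * x := (Dvd.intro_left Φ hCc.symm).trans h1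
    have h4 := map_dvd (Polynomial.mapRingHom φ) h3
    simpa [Polynomial.coe_mapRingHom, Polynomial.map_mul, Polynomial.map_pow] using h4
  have hdvdx : Cc.map φ ∣ x.map φ := hcop.dvd_of_dvd_mul_left hdvdK
  have hinj : Function.Injective φ := Subtype.coe_injective
  have hZ : Cc ∣ x := by
    rw [← modByMonic_eq_zero_iff_dvd hCcM]
    apply Polynomial.map_injective φ hinj
    rw [Polynomial.map_modByMonic φ hCcM, Polynomial.map_zero,
      modByMonic_eq_zero_iff_dvd (hCcM.map φ)]
    exact hdvdx
  obtain ⟨y, hy⟩ := hZ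
  obtain ⟨Cn, hCn⟩ :=
    (cyclotomic.dvd_X_pow_sub_one m (PadicInt p)).trans (X_pow_sub_one_dvd hmn)
  set σ : Polynomial (PadicInt p) :=
    ∑ i ∈ Finset.range (p ^ j), ((X : Polynomial (PadicInt p)) ^ (n : ℕ)) ^ i with hσdef
  have hσ : ((X : Polynomial (PadicInt p)) ^ (n : ℕ) - 1) * σ
      = (X : Polynomial (PadicInt p)) ^ (N : ℕ) - 1 := by
    rw [mul_comm, hσdef, geom_sum_mul, ← pow_mul, ← hNn]
  have hCfac : Cc = Cn * σ := by
    have hΦ0 : Φ ≠ 0 := cyclotomic_ne_zero m (PadicInt p)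
    apply mul_left_cancel₀ hΦ0
    rw [← hCc, ← hσ, hCn, mul_assoc]
  set mkn := Ideal.Quotient.mk
    (Ideal.span {(X : Polynomial (PadicInt p)) ^ (n : ℕ) - 1}) with hmkn
  have hXn1 : mkn ((X : Polynomial (PadicInt p)) ^ (n : ℕ)) = 1 := by
    have h0 : mkn ((X : Polynomial (PadicInt p)) ^ (n : ℕ) - 1) = 0 := by
      rw [hmkn, Ideal.Quotient.eq_zero_iff_mem]
      exact Ideal.subset_span rfl
    rw [map_sub, map_one, sub_eq_zero] at h0
    exact h0
  have hmkσ : mkn σ = (p : CycModN (PadicInt p) n) ^ j := by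
    rw [hσdef, map_sum]
    simp only [map_pow, hXn1, one_pow]
    rw [Finset.sum_const, Finset.card_range, nsmul_eq_mul, mul_one, Nat.cast_pow]
  refine ⟨mkn (Cn * y), ?_⟩
  have hc := compat n N hnN
  rw [← hc, ← hx]
  unfold cycTransition
  rw [Ideal.Quotient.factor_mk]
  rw [hy, hCfac]
  simp only [map_mul, hmkσ]
  rw [← hmkn, hmkσ]
  ring
end
end
end
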